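/- arXiv:1904.01047 — 7 statements merged into one kernel-verified Lean document; each statement's English description precedes it below -/
import Mathlib

section
/- Let T > 0, let 𝒵 ⊆ ℝ be open, set 𝒰 := 𝒵 × (0, T) and Γ := (∂𝒵 × [0, T]) ∪ (𝒵̄ × {0}). Suppose H : ℝ² × ℝ × ℝ → ℝ satisfies conditions (R1)–(R3). Let u, v : ℝ² → ℝ be bounded and uniformly continuous on 𝒰̄, with u a viscosity subsolution and v a viscosity supersolution on 𝒰 of ∂_t f + H((z,t), f, ∂_z f) = 0 (i.e., of F = 0 with F((z,t), q, (p_z, p_t)) := p_t + H((z,t), q, p_z)). Then sup_{(z,t) ∈ 𝒰̄} (u(z,t) − v(z,t))₊ ≤ sup_{(z,t) ∈ Γ} (u(z,t) − v(z,t))₊, where (a)₊ := max{a, 0}. -/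
open Set Filter
set_option maxHeartbeats 1000000

/-- `u` is a viscosity subsolution of `F (y, u y, Du y) = 0` on the open set `U ⊆ ℝ²`. -/
def IsViscositySubsolnOn (F : (ℝ × ℝ) → ℝ → (ℝ × ℝ) → ℝ) (u : ℝ × ℝ → ℝ)
    (U : Set (ℝ × ℝ)) : Prop :=
  ContinuousOn u U ∧
    ∀ φ : (ℝ × ℝ) → ℝ, ContDiff ℝ 2 φ → ∀ y ∈ U,
      IsLocalMax (fun p => u p - φ p) y →
        F y (u y) (fderiv ℝ φ y (1, 0), fderiv ℝ φ y (0, 1)) ≤ 0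

/-- `u` is a viscosity supersolution of `F (y, u y, Du y) = 0` on the open set `U ⊆ ℝ²`. -/
def IsViscositySupersolnOn (F : (ℝ × ℝ) → ℝ → (ℝ × ℝ) → ℝ) (u : ℝ × ℝ → ℝ)
    (U : Set (ℝ × ℝ)) : Prop :=
  ContinuousOn u U ∧
    ∀ φ : (ℝ × ℝ) → ℝ, ContDiff ℝ 2 φ → ∀ y ∈ U,
      IsLocalMin (fun p => u p - φ p) y →
        0 ≤ F y (u y) (fderiv ℝ φ y (1, 0), fderiv ℝ φ y (0, 1))

/-- A modulus of continuity: nondecreasing, nonnegative on `[0,∞)`, `ω 0 = 0`,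
and `ω s → 0` as `s → 0⁺`. -/
def IsModulus (ω : ℝ → ℝ) : Prop :=
  Monotone ω ∧ ω 0 = 0 ∧ (∀ s, 0 ≤ s → 0 ≤ ω s) ∧
    Tendsto ω (nhdsWithin 0 (Ioi 0)) (nhds 0)

/-- Conditions (R1)–(R2) on a Hamiltonian `H (y, u, p)` with `y ∈ ℝ²`, `u p ∈ ℝ`. -/
def SatisfiesR1R2 (H : (ℝ × ℝ) → ℝ → ℝ → ℝ) : Prop :=
  UniformContinuous (fun x : (ℝ × ℝ) × ℝ × ℝ => H x.1 x.2.1 x.2.2) ∧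
    ∃ ω : ℝ → ℝ, IsModulus ω ∧
      (∀ (y₁ y₂ : ℝ × ℝ) (u p₁ p₂ : ℝ),
        |H y₁ u p₁ - H y₂ u p₂| ≤ ω (‖y₁ - y₂‖ + |p₁ - p₂|)) ∧
      (∀ (y₁ y₂ : ℝ × ℝ) (u p : ℝ),
        |H y₁ u p - H y₂ u p| ≤ ω (‖y₁ - y₂‖ * (1 + |p|)))

/-- Condition (R3): `H (y, u, p)` is non-decreasing in `u`. -/
def SatisfiesR3 (H : (ℝ × ℝ) → ℝ → ℝ → ℝ) : Prop :=
  ∀ (y : ℝ × ℝ) (p : ℝ), Monotone fun u => H y u p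

def Qd (x y : ℝ×ℝ) : ℝ := (x.1-y.1)^2 + (x.2-y.2)^2

lemma Qd_def (x y : ℝ×ℝ) : Qd x y = (x.1-y.1)^2 + (x.2-y.2)^2 := rfl

lemma Qd_nonneg (x y : ℝ×ℝ) : 0 ≤ Qd x y := by unfold Qd; positivity

lemma Qd_self (x : ℝ×ℝ) : Qd x x = 0 := by simp [Qd]

lemma sqle (a b : ℝ) (h : a^2 ≤ b^2) (hb : 0 ≤ b) : |a| ≤ b := by
  nlinarith [abs_nonneg a, sq_abs a]

lemma abs_le_of_sq_le (a X : ℝ) (h : a^2 ≤ X) (hX : 0 ≤ X) : |a| ≤ X + 1 := by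
  nlinarith [abs_nonneg a, sq_abs a]

lemma hasDerivAt_quad (k c : ℝ) (z : ℝ) : HasDerivAt (fun z => k*(z-c)^2) (2*k*(z-c)) z := by
  have h := (((hasDerivAt_id z).sub_const c).pow 2).const_mul k
  exact h.congr_deriv (by simp only [id_eq]; push_cast; ring)

lemma hasDerivAt_lin (k c : ℝ) (z : ℝ) : HasDerivAt (fun z => k*(z-c)) k z := by
  have h := ((hasDerivAt_id z).sub_const c).const_mul k
  simpa using h

lemma fderiv_eval (P Q : ℝ → ℝ) (p' q' : ℝ) (x : ℝ×ℝ) (hp : HasDerivAt P p' x.1)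
    (hq : HasDerivAt Q q' x.2) :
    fderiv ℝ (fun y : ℝ×ℝ => P y.1 + Q y.2) x (1,0) = p' ∧
      fderiv ℝ (fun y : ℝ×ℝ => P y.1 + Q y.2) x (0,1) = q' := by
  have h1 : HasFDerivAt (fun y : ℝ×ℝ => P y.1)
      (p' • (ContinuousLinearMap.fst ℝ ℝ ℝ)) x := hp.comp_hasFDerivAt x (hasFDerivAt_fst)
  have h2 : HasFDerivAt (fun y : ℝ×ℝ => Q y.2)
      (q' • (ContinuousLinearMap.snd ℝ ℝ ℝ)) x := hq.comp_hasFDerivAt x (hasFDerivAt_snd)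
  have h : fderiv ℝ (fun y : ℝ×ℝ => P y.1 + Q y.2) x = _ := (h1.add h2).fderiv
  rw [h]
  constructor <;> simp

lemma taylor_ineq (η τ a b : ℝ) (hη : 0 < η) (hτ : 0 < τ) (ha : τ ≤ a) (hb : τ/2 ≤ b) :
    η/b ≤ η/a + (η/a^2)*(a-b) + (2*η/τ^3)*(a-b)^2 := by
  have ha0 : 0 < a := lt_of_lt_of_le hτ ha
  have hb0 : 0 < b := lt_of_lt_of_le (by linarith) hb
  have key : η/b - η/a - (η/a^2)*(a-b) = η*(a-b)^2/(a^2*b) := by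
    field_simp
  have habc : τ^3 ≤ 2*(a^2*b) := by
    have h1 : τ^2 ≤ a^2 := by nlinarith
    have h3 : τ^2*(τ/2) ≤ a^2*b := mul_le_mul h1 hb (by positivity) (by positivity)
    nlinarith
  have h2 : η*(a-b)^2/(a^2*b) ≤ (2*η/τ^3)*(a-b)^2 := by
    rw [div_le_iff₀ (by positivity)]
    have h4 : (2*η/τ^3)*(a-b)^2*(a^2*b) = (η*(a-b)^2) * (2*(a^2*b)/τ^3) := by ring
    rw [h4]
    have h5 : (1:ℝ) ≤ 2*(a^2*b)/τ^3 := by rw [le_div_iff₀ (by positivity)]; linarith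
    nlinarith [mul_nonneg (le_of_lt hη) (sq_nonneg (a-b))]
  linarith

/-- the membership of a non-Γ point of K in the open cylinder -/
lemma memU (T : ℝ) (Z : Set ℝ) (hZ : IsOpen Z) (x : ℝ×ℝ)
    (hx : x ∈ closure Z ×ˢ Icc (0:ℝ) T)
    (hxΓ : x ∉ (frontier Z ×ˢ Icc (0:ℝ) T) ∪ (closure Z ×ˢ ({0}:Set ℝ)))
    (hxT : x.2 < T) : x ∈ Z ×ˢ Ioo (0:ℝ) T := by
  obtain ⟨h1, h2⟩ := hx
  constructor
  · by_cases hf : x.1 ∈ frontier Z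
    · exact absurd (Or.inl ⟨hf, h2⟩) hxΓ
    · rcases closure_eq_interior_union_frontier Z ▸ h1 with h3 | h3
      · rwa [hZ.interior_eq] at h3
      · exact absurd h3 hf
  · refine ⟨lt_of_le_of_ne h2.1 ?_, hxT⟩
    intro h0
    exact hxΓ (Or.inr ⟨h1, by simp [← h0]⟩)

/-- well-definedness of the maximum point of the doubled functional -/
lemma argmax_exists (T η ε δ τ θS : ℝ) (hη : 0<η) (hε : 0<ε) (hδ : 0<δ) (hτ : 0<τ)
    (Z : Set ℝ) (u v : ℝ×ℝ → ℝ)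
    (hu : ContinuousOn u (closure Z ×ˢ Icc (0:ℝ) T))
    (hv : ContinuousOn v (closure Z ×ˢ Icc (0:ℝ) T))
    (pb : ℝ×ℝ) (hpb : pb ∈ closure Z ×ˢ Icc (0:ℝ) T)
    (E D : ℝ)
    (G : (ℝ×ℝ)×(ℝ×ℝ) → ℝ)
    (hG : G = fun w => u w.1 - v w.2 - η/(T-w.1.2) - (1/ε) * Qd w.1 w.2 - δ * Qd w.1 pb)
    (hpbτ : pb.2 ≤ T - τ)
    (hGimp : ∀ w : (ℝ×ℝ)×(ℝ×ℝ), w.1 ∈ closure Z ×ˢ Icc (0:ℝ) T →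
      w.2 ∈ closure Z ×ˢ Icc (0:ℝ) T → w.1.2 < T → θS ≤ G w →
      (w.1.2 ≤ T - τ ∧ Qd w.1 w.2 ≤ E ∧ Qd w.1 pb ≤ D))
    (hθS : θS ≤ G (pb, pb))
    (hE : 0 ≤ E) (hD : 0 ≤ D) :
    ∃ wh : (ℝ×ℝ)×(ℝ×ℝ), (wh.1 ∈ closure Z ×ˢ Icc (0:ℝ) T ∧ wh.2 ∈ closure Z ×ˢ Icc (0:ℝ) T ∧
      wh.1.2 ≤ T - τ ∧ Qd wh.1 wh.2 ≤ E ∧ Qd wh.1 pb ≤ D) ∧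
      G (pb, pb) ≤ G wh ∧
      (∀ x y : ℝ×ℝ, x ∈ closure Z ×ˢ Icc (0:ℝ) T → y ∈ closure Z ×ˢ Icc (0:ℝ) T →
        x.2 < T → G (x, y) ≤ G wh) := by
  classical
  set K := closure Z ×ˢ Icc (0:ℝ) T with hK
  have hKc : IsClosed K := isClosed_closure.prod isClosed_Icc
  set Sset : Set ((ℝ×ℝ)×(ℝ×ℝ)) :=
    {w | w.1 ∈ K ∧ w.2 ∈ K ∧ w.1.2 ≤ T - τ ∧ Qd w.1 w.2 ≤ E ∧ Qd w.1 pb ≤ D} with hSset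
  have hpbmem : (pb, pb) ∈ Sset := by
    refine ⟨hpb, hpb, hpbτ, ?_, ?_⟩ <;> rw [Qd_self] <;> assumption
  have hQcont : Continuous fun w : (ℝ×ℝ)×(ℝ×ℝ) => Qd w.1 w.2 := by
    simp only [Qd_def]; fun_prop
  have hQcont2 : Continuous fun w : (ℝ×ℝ)×(ℝ×ℝ) => Qd w.1 pb := by
    simp only [Qd_def]; fun_prop
  have hclosed : IsClosed Sset := by
    have heq : Sset = (Prod.fst ⁻¹' K) ∩ ((Prod.snd ⁻¹' K) ∩
        ({w : (ℝ×ℝ)×(ℝ×ℝ) | w.1.2 ≤ T - τ} ∩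
        ({w : (ℝ×ℝ)×(ℝ×ℝ) | Qd w.1 w.2 ≤ E} ∩ {w : (ℝ×ℝ)×(ℝ×ℝ) | Qd w.1 pb ≤ D}))) := rfl
    rw [heq]
    exact (hKc.preimage continuous_fst).inter ((hKc.preimage continuous_snd).inter
      ((isClosed_le (by fun_prop) continuous_const).inter
      ((isClosed_le hQcont continuous_const).inter (isClosed_le hQcont2 continuous_const))))
  have hbounded : Bornology.IsBounded Sset := by
    apply (Metric.isBounded_closedBall (x := (pb,pb)) (r := (D+1) + (E+1))).subset
    rintro ⟨x, y⟩ ⟨hx, hy, _, hQ1, hQ2⟩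
    have hQ2' := Qd_def x pb ▸ hQ2
    have hQ1' := Qd_def x y ▸ hQ1
    have b1 : |x.1 - pb.1| ≤ D + 1 := abs_le_of_sq_le _ _ (by nlinarith [sq_nonneg (x.2-pb.2)]) hD
    have b2 : |x.2 - pb.2| ≤ D + 1 := abs_le_of_sq_le _ _ (by nlinarith [sq_nonneg (x.1-pb.1)]) hD
    have c1 : |x.1 - y.1| ≤ E + 1 := abs_le_of_sq_le _ _ (by nlinarith [sq_nonneg (x.2-y.2)]) hE
    have c2 : |x.2 - y.2| ≤ E + 1 := abs_le_of_sq_le _ _ (by nlinarith [sq_nonneg (x.1-y.1)]) hE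
    simp only [Metric.mem_closedBall, Prod.dist_eq, Real.dist_eq]
    have d1 : |y.1 - pb.1| ≤ |x.1 - y.1| + |x.1 - pb.1| := by
      rw [abs_sub_comm x.1 y.1]; exact abs_sub_le _ _ _
    have d2 : |y.2 - pb.2| ≤ |x.2 - y.2| + |x.2 - pb.2| := by
      rw [abs_sub_comm x.2 y.2]; exact abs_sub_le _ _ _
    apply max_le <;> apply max_le <;> linarith
  have hGcont : ContinuousOn G Sset := by
    have h1 : ContinuousOn (fun w : (ℝ×ℝ)×(ℝ×ℝ) => u w.1) Sset :=
      hu.comp continuous_fst.continuousOn (fun w hw => hw.1)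
    have h2 : ContinuousOn (fun w : (ℝ×ℝ)×(ℝ×ℝ) => v w.2) Sset :=
      hv.comp continuous_snd.continuousOn (fun w hw => hw.2.1)
    have h3 : ContinuousOn (fun w : (ℝ×ℝ)×(ℝ×ℝ) => η/(T - w.1.2)) Sset := by
      apply ContinuousOn.div continuousOn_const (by fun_prop)
      intro w hw h0
      have h5 := hw.2.2.1
      have : (0:ℝ) < T - w.1.2 := by linarith
      linarith [this.ne' h0]
    have h4 : ContinuousOn (fun w : (ℝ×ℝ)×(ℝ×ℝ) => (1/ε) * Qd w.1 w.2) Sset :=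
      (continuous_const.mul hQcont).continuousOn
    have h5 : ContinuousOn (fun w : (ℝ×ℝ)×(ℝ×ℝ) => δ * Qd w.1 pb) Sset :=
      (continuous_const.mul hQcont2).continuousOn
    rw [hG]
    exact (((h1.sub h2).sub h3).sub h4).sub h5
  obtain ⟨wh, hwhS, hwhmax⟩ := (Metric.isCompact_of_isClosed_isBounded hclosed
    hbounded).exists_isMaxOn ⟨(pb,pb), hpbmem⟩ hGcont
  have hmax : ∀ w ∈ Sset, G w ≤ G wh := fun w hw => hwhmax hw
  have hGpb : G (pb, pb) ≤ G wh := hmax _ hpbmem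
  refine ⟨wh, hwhS, hGpb, ?_⟩
  intro x y hx hy hxT
  by_cases hc : θS ≤ G (x, y)
  · exact hmax (x,y) ⟨hx, hy, hGimp (x,y) hx hy hxT hc⟩
  · push_neg at hc
    linarith

lemma sq_bound2 (d B q r m : ℝ) (hd : 0 < d) (h8 : d*(q^2+r^2) ≤ 2*B) (hdm : 8*B*d = m^2) :
    (2*d*q)^2 ≤ m^2 := by
  have h1 := mul_le_mul_of_nonneg_left h8 hd.le
  have h2 : 0 ≤ d*(d*r^2) := by positivity
  nlinarith [h1, h2]

lemma prod_bound (n dz dt iε ρ : ℝ) (hn : n ≤ |dz| + |dt|) (hiε : 0 ≤ iε)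
    (hQ : iε*(dz^2+dt^2) ≤ ρ) (hn0 : 0 ≤ n) :
    n * (2*iε*|dz|) ≤ 3*ρ := by
  have h1 : 0 ≤ (|dz| + |dt| - n) * (2*iε*|dz|) :=
    mul_nonneg (by linarith) (by positivity)
  have h2 : 0 ≤ iε * (|dz| - |dt|)^2 := by positivity
  have h3 : 0 ≤ iε * dt^2 := by positivity
  have h4 : |dz|^2 = dz^2 := sq_abs dz
  have h5 : |dt|^2 = dt^2 := sq_abs dt
  nlinarith [h1, h2, h3, h4, h5]

lemma c1bound (η T x : ℝ) (hη : 0 < η) (hx : 0 ≤ x) (hxT : x < T) : η*(T-x)^2 ≤ η*T^2 := by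
  nlinarith [mul_nonneg (mul_nonneg hη.le hx) (by linarith : (0:ℝ) ≤ 2*T - x)]

lemma comparison_core (T : ℝ) (hT : 0 < T) (Z : Set ℝ) (hZ : IsOpen Z)
    (H : (ℝ × ℝ) → ℝ → ℝ → ℝ) (hH12 : SatisfiesR1R2 H) (hH3 : SatisfiesR3 H)
    (u v : ℝ × ℝ → ℝ)
    (Mu Mv : ℝ)
    (hMu : ∀ p ∈ closure Z ×ˢ Icc (0:ℝ) T, |u p| ≤ Mu)
    (hMv : ∀ p ∈ closure Z ×ˢ Icc (0:ℝ) T, |v p| ≤ Mv)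
    (huc : UniformContinuousOn u (closure Z ×ˢ Icc (0:ℝ) T))
    (hvc : UniformContinuousOn v (closure Z ×ˢ Icc (0:ℝ) T))
    (hsub : IsViscositySubsolnOn (fun y q p => p.2 + H y q p.1) u (Z ×ˢ Ioo (0 : ℝ) T))
    (hsup : IsViscositySupersolnOn (fun y q p => p.2 + H y q p.1) v (Z ×ˢ Ioo (0 : ℝ) T))
    (S : ℝ) (hS0 : 0 ≤ S)
    (hSΓ : ∀ q ∈ (frontier Z ×ˢ Icc (0:ℝ) T) ∪ (closure Z ×ˢ ({0}:Set ℝ)), u q - v q ≤ S)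
    (η : ℝ) (hη : 0 < η) :
    ∀ x ∈ closure Z ×ˢ Icc (0:ℝ) T, x.2 < T → u x - v x - η/(T - x.2) ≤ S := by
  by_contra hcon
  push_neg at hcon
  obtain ⟨pb, hpbK, hpbT, hpbS⟩ := hcon
  -- constants
  obtain ⟨B', hB'def⟩ : ∃ x : ℝ, x = |Mu| + |Mv| + 1 := ⟨_, rfl⟩
  have hB' : 0 < B' := by rw [hB'def]; positivity
  have huv2 : ∀ x ∈ closure Z ×ˢ Icc (0:ℝ) T, ∀ y ∈ closure Z ×ˢ Icc (0:ℝ) T,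
      u x - v y ≤ B' - 1 := by
    intro x hx y hy
    have h1 := hMu x hx
    have h2 := hMv y hy
    have := le_abs_self Mu
    have := le_abs_self Mv
    have := (abs_le.mp h1).2
    have := (abs_le.mp h2).1
    simp only [hB'def]
    linarith
  have hTpb : 0 < T - pb.2 := by linarith
  obtain ⟨θ, hθdef⟩ : ∃ x : ℝ, x = u pb - v pb - η/(T - pb.2) - S := ⟨_, rfl⟩
  have hθ : 0 < θ := by rw [hθdef]; linarith
  have hθB : S + θ ≤ B' - 1 := by
    have h1 := huv2 pb hpbK pb hpbK
    have h2 : 0 < η/(T - pb.2) := div_pos hη hTpb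
    rw [hθdef]; linarith
  obtain ⟨τ, hτdef⟩ : ∃ x : ℝ, x = η/(2*B') := ⟨_, rfl⟩
  have hτ : 0 < τ := by rw [hτdef]; positivity
  obtain ⟨μ, hμdef⟩ : ∃ x : ℝ, x = η/(4*T^2) := ⟨_, rfl⟩
  have hμ : 0 < μ := by rw [hμdef]; positivity
  obtain ⟨hHuc, ω, ⟨hωmono, hω0, hωnn, hωtend⟩, hω1, hω2⟩ := hH12
  obtain ⟨s₁, hs₁ω, hs₁pos⟩ :=
    ((hωtend.eventually (Iio_mem_nhds hμ)).and self_mem_nhdsWithin).exists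
  obtain ⟨ρ, hρdef⟩ : ∃ x : ℝ, x = min (s₁/8) (θ/2) := ⟨_, rfl⟩
  have hρ : 0 < ρ := by rw [hρdef]; apply lt_min <;> positivity
  obtain ⟨δu, hδu0, hδu⟩ := Metric.uniformContinuousOn_iff.mp huc ρ hρ
  obtain ⟨δv, hδv0, hδv⟩ := Metric.uniformContinuousOn_iff.mp hvc ρ hρ
  obtain ⟨e₁, he₁def⟩ : ∃ x : ℝ, x = min (min δu δv) (min (s₁/4) (τ/2)) / 2 := ⟨_, rfl⟩
  have hminpos : 0 < min (min δu δv) (min (s₁/4) (τ/2)) :=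
    lt_min (lt_min hδu0 hδv0) (lt_min (by positivity) (by positivity))
  have he₁ : 0 < e₁ := by rw [he₁def]; exact div_pos hminpos two_pos
  have he₁δu : e₁ < δu := by
    have h2 := le_trans (min_le_left (min δu δv) (min (s₁/4) (τ/2))) (min_le_left δu δv)
    rw [he₁def]; linarith
  have he₁δv : e₁ < δv := by
    have h2 := le_trans (min_le_left (min δu δv) (min (s₁/4) (τ/2))) (min_le_right δu δv)
    rw [he₁def]; linarith
  have he₁s : e₁ ≤ s₁/8 := by
    have h2 := le_trans (min_le_right (min δu δv) (min (s₁/4) (τ/2))) (min_le_left (s₁/4) (τ/2))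
    rw [he₁def]; linarith
  have he₁τ : e₁ ≤ τ/4 := by
    have h2 := le_trans (min_le_right (min δu δv) (min (s₁/4) (τ/2))) (min_le_right (s₁/4) (τ/2))
    rw [he₁def]; linarith
  obtain ⟨ε, hεdef⟩ : ∃ x : ℝ, x = e₁^2/(2*B') := ⟨_, rfl⟩
  have hε : 0 < ε := by rw [hεdef]; positivity
  have hεe : 2*B'*ε = e₁^2 := by rw [hεdef]; field_simp
  obtain ⟨m, hmdef⟩ : ∃ x : ℝ, x = min μ s₁ := ⟨_, rfl⟩
  have hm : 0 < m := by rw [hmdef]; exact lt_min hμ hs₁pos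
  obtain ⟨δ, hδdef⟩ : ∃ x : ℝ, x = m^2/(8*B') := ⟨_, rfl⟩
  have hδ0 : 0 < δ := by rw [hδdef]; positivity
  have hδm : 8*B'*δ = m^2 := by rw [hδdef]; field_simp
  obtain ⟨G, hG⟩ : ∃ G : (ℝ×ℝ)×(ℝ×ℝ) → ℝ,
      G = fun w => u w.1 - v w.2 - η/(T-w.1.2) - (1/ε) * Qd w.1 w.2 - δ * Qd w.1 pb := ⟨_, rfl⟩
  -- the implication
  have himp : ∀ w : (ℝ×ℝ)×(ℝ×ℝ), w.1 ∈ closure Z ×ˢ Icc (0:ℝ) T →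
      w.2 ∈ closure Z ×ˢ Icc (0:ℝ) T → w.1.2 < T → S + θ ≤ G w →
      (w.1.2 ≤ T - τ ∧ Qd w.1 w.2 ≤ 2*B'*ε ∧ Qd w.1 pb ≤ 2*B'/δ) := by
    intro w h1 h2 h3 h4
    have hTw : 0 < T - w.1.2 := by linarith
    have huvw : u w.1 - v w.2 ≤ B' - 1 := huv2 _ h1 _ h2
    rw [hG] at h4
    have h4' : S + θ ≤ u w.1 - v w.2 - η/(T-w.1.2) - (1/ε)*Qd w.1 w.2 - δ*Qd w.1 pb := h4
    have hp1 : 0 < η/(T-w.1.2) := div_pos hη hTw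
    have hp2 : 0 ≤ (1/ε) * Qd w.1 w.2 := mul_nonneg (by positivity) (Qd_nonneg _ _)
    have hp3 : 0 ≤ δ * Qd w.1 pb := mul_nonneg hδ0.le (Qd_nonneg _ _)
    have c1 : η/(T-w.1.2) ≤ 2*B' := by linarith
    have c2 : (1/ε) * Qd w.1 w.2 ≤ 2*B' := by linarith
    have c3 : δ * Qd w.1 pb ≤ 2*B' := by linarith
    refine ⟨?_, ?_, ?_⟩
    · have h5 : η ≤ 2*B'*(T - w.1.2) := (div_le_iff₀ hTw).mp c1
      have h6 : τ ≤ T - w.1.2 := by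
        rw [hτdef, div_le_iff₀ (show (0:ℝ) < 2*B' by positivity)]
        linarith [mul_comm (2*B') (T - w.1.2)]
      linarith
    · have h6 := mul_le_mul_of_nonneg_left c2 hε.le
      have h7 : ε * ((1/ε) * Qd w.1 w.2) = Qd w.1 w.2 := by field_simp
      rw [h7] at h6
      linarith [mul_comm ε (2*B')]
    · rw [le_div_iff₀ hδ0]
      linarith [mul_comm δ (Qd w.1 pb)]
  have hGpbval : G (pb, pb) = S + θ := by
    rw [hG]
    show u pb - v pb - η/(T-pb.2) - (1/ε) * Qd pb pb - δ * Qd pb pb = S + θ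
    rw [Qd_self, hθdef]; ring
  obtain ⟨wh, ⟨hxK, hyK, hxτ, hQE, hQD⟩, hGpb, hLmax⟩ :=
    argmax_exists T η ε δ τ (S+θ) hη hε hδ0 hτ Z u v huc.continuousOn hvc.continuousOn
      pb hpbK (2*B'*ε) (2*B'/δ) G hG
      (himp (pb,pb) hpbK hpbK hpbT (le_of_eq hGpbval.symm)).1
      himp (le_of_eq hGpbval.symm) (by positivity) (by positivity)
  have hGwh : S + θ ≤ G wh := le_trans (le_of_eq hGpbval.symm) hGpb
  have hxT' : wh.1.2 < T := by linarith
  have hxt0 : 0 ≤ wh.1.2 := hxK.2.1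
  have hTx : 0 < T - wh.1.2 := by linarith
  -- coordinate bounds
  have hQE' : (wh.1.1-wh.2.1)^2 + (wh.1.2-wh.2.2)^2 ≤ e₁^2 := by
    rw [← Qd_def]; linarith
  have hz : |wh.1.1 - wh.2.1| ≤ e₁ :=
    sqle _ _ (by linarith [hQE', sq_nonneg (wh.1.2-wh.2.2)]) he₁.le
  have ht2 : |wh.1.2 - wh.2.2| ≤ e₁ :=
    sqle _ _ (by linarith [hQE', sq_nonneg (wh.1.1-wh.2.1)]) he₁.le
  have hdist : dist wh.1 wh.2 ≤ e₁ := by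
    rw [Prod.dist_eq, Real.dist_eq, Real.dist_eq]; exact max_le hz ht2
  have hvdiff : |v wh.1 - v wh.2| < ρ := by
    have h := hδv wh.1 hxK wh.2 hyK (lt_of_le_of_lt hdist he₁δv)
    rwa [Real.dist_eq] at h
  have hudiff : |u wh.1 - u wh.2| < ρ := by
    have h := hδu wh.1 hxK wh.2 hyK (lt_of_le_of_lt hdist he₁δu)
    rwa [Real.dist_eq] at h
  have hpen1 : 0 < η/(T - wh.1.2) := div_pos hη hTx
  have hpen2 : 0 ≤ (1/ε) * Qd wh.1 wh.2 := mul_nonneg (by positivity) (Qd_nonneg _ _)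
  have hpen3 : 0 ≤ δ * Qd wh.1 pb := mul_nonneg hδ0.le (Qd_nonneg _ _)
  have hGex : S + θ ≤ u wh.1 - v wh.2 - η/(T-wh.1.2) - (1/ε) * Qd wh.1 wh.2
      - δ * Qd wh.1 pb := by rw [hG] at hGwh; exact hGwh
  have huge : S + θ ≤ u wh.1 - v wh.2 := by linarith
  have hρθ : ρ ≤ θ/2 := by rw [hρdef]; exact min_le_right _ _
  have hρs : ρ ≤ s₁/8 := by rw [hρdef]; exact min_le_left _ _
  -- boundary cases
  by_cases hxΓ : wh.1 ∈ (frontier Z ×ˢ Icc (0:ℝ) T) ∪ (closure Z ×ˢ ({0}:Set ℝ))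
  · exfalso
    have h1 := hSΓ wh.1 hxΓ
    have h2 : v wh.1 - v wh.2 ≤ |v wh.1 - v wh.2| := le_abs_self _
    linarith
  by_cases hyΓ : wh.2 ∈ (frontier Z ×ˢ Icc (0:ℝ) T) ∪ (closure Z ×ˢ ({0}:Set ℝ))
  · exfalso
    have h1 := hSΓ wh.2 hyΓ
    have h2 : u wh.1 - u wh.2 ≤ |u wh.1 - u wh.2| := le_abs_self _
    linarith
  have hxU : wh.1 ∈ Z ×ˢ Ioo (0:ℝ) T := memU T Z hZ wh.1 hxK hxΓ hxT'
  have hyT : wh.2.2 < T := by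
    have := (abs_le.mp ht2).1
    linarith
  have hyU : wh.2 ∈ Z ×ˢ Ioo (0:ℝ) T := memU T Z hZ wh.2 hyK hyΓ hyT
  -- derivative data
  obtain ⟨a, hadef⟩ : ∃ x : ℝ, x = 2*(1/ε)*(wh.1.1 - wh.2.1) := ⟨_, rfl⟩
  obtain ⟨ee, heedef⟩ : ∃ x : ℝ, x = 2*(1/ε)*(wh.1.2 - wh.2.2) := ⟨_, rfl⟩
  obtain ⟨bz, hbzdef⟩ : ∃ x : ℝ, x = 2*δ*(wh.1.1 - pb.1) := ⟨_, rfl⟩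
  obtain ⟨bt, hbtdef⟩ : ∃ x : ℝ, x = 2*δ*(wh.1.2 - pb.2) := ⟨_, rfl⟩
  obtain ⟨c₁, hc₁def⟩ : ∃ x : ℝ, x = η/(T - wh.1.2)^2 := ⟨_, rfl⟩
  obtain ⟨A, hAdef⟩ : ∃ x : ℝ, x = 2*η/τ^3 := ⟨_, rfl⟩
  -- subsolution inequality
  have key1 : ee + bt + c₁ + H wh.1 (u wh.1) (a + bz) ≤ 0 := by
    obtain ⟨P1, hP1def⟩ : ∃ f : ℝ → ℝ,
      f = fun z => (1/ε)*(z-wh.2.1)^2 + δ*(z-pb.1)^2 := ⟨_, rfl⟩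
    obtain ⟨Q1, hQ1def⟩ : ∃ f : ℝ → ℝ,
      f = fun t => (1/ε)*(t-wh.2.2)^2 + δ*(t-pb.2)^2 + c₁*(t-wh.1.2) + A*(t-wh.1.2)^2 :=
        ⟨_, rfl⟩
    have hCD : ContDiff ℝ 2 (fun w : ℝ×ℝ => P1 w.1 + Q1 w.2) := by
      rw [hP1def, hQ1def]; fun_prop
    have hP1' : HasDerivAt P1 (a + bz) wh.1.1 := by
      rw [hP1def, hadef, hbzdef]
      have h := (hasDerivAt_quad (1/ε) wh.2.1 wh.1.1).add (hasDerivAt_quad δ pb.1 wh.1.1)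
      exact h.congr_deriv (by ring)
    have hQ1' : HasDerivAt Q1 (ee + bt + c₁) wh.1.2 := by
      rw [hQ1def, heedef, hbtdef]
      have h := (((hasDerivAt_quad (1/ε) wh.2.2 wh.1.2).add
        (hasDerivAt_quad δ pb.2 wh.1.2)).add
        (hasDerivAt_lin c₁ wh.1.2 wh.1.2)).add (hasDerivAt_quad A wh.1.2 wh.1.2)
      exact h.congr_deriv (by ring)
    have hN : IsOpen ((Z ×ˢ Ioo (0:ℝ) T) ∩ {w : ℝ×ℝ | |w.2 - wh.1.2| < τ/2}) :=
      (hZ.prod isOpen_Ioo).inter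
        (isOpen_lt (continuous_snd.sub continuous_const).abs continuous_const)
    have hxN : wh.1 ∈ (Z ×ˢ Ioo (0:ℝ) T) ∩ {w : ℝ×ℝ | |w.2 - wh.1.2| < τ/2} :=
      ⟨hxU, by simp only [mem_setOf_eq, sub_self, abs_zero]; positivity⟩
    have hlocmax : IsLocalMax (fun p : ℝ×ℝ => u p - (P1 p.1 + Q1 p.2)) wh.1 := by
      have hev : ∀ᶠ w in nhds wh.1,
          u w - (P1 w.1 + Q1 w.2) ≤ u wh.1 - (P1 wh.1.1 + Q1 wh.1.2) := by
        filter_upwards [hN.mem_nhds hxN] with w hw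
        obtain ⟨hwU, hwτ⟩ := hw
        simp only [mem_setOf_eq] at hwτ
        have hwK : w ∈ closure Z ×ˢ Icc (0:ℝ) T :=
          ⟨subset_closure hwU.1, Ioo_subset_Icc_self hwU.2⟩
        have hwT : w.2 < T := hwU.2.2
        have hGw := hLmax w wh.2 hwK hyK hwT
        rw [hG] at hGw
        have hGw' : u w - v wh.2 - η/(T-w.2) - (1/ε)*Qd w wh.2 - δ*Qd w pb ≤
          u wh.1 - v wh.2 - η/(T-wh.1.2) - (1/ε)*Qd wh.1 wh.2 - δ*Qd wh.1 pb := hGw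
        have habs := abs_lt.mp hwτ
        have htay := taylor_ineq η τ (T-wh.1.2) (T-w.2) hη hτ (by linarith) (by linarith)
        have he : (T-wh.1.2) - (T-w.2) = w.2 - wh.1.2 := by ring
        rw [he, ← hc₁def, ← hAdef] at htay
        rw [Qd_def w wh.2, Qd_def w pb, Qd_def wh.1 wh.2, Qd_def wh.1 pb] at hGw'
        rw [hP1def, hQ1def]
        show u w - ((1/ε)*(w.1-wh.2.1)^2 + δ*(w.1-pb.1)^2 +
            ((1/ε)*(w.2-wh.2.2)^2 + δ*(w.2-pb.2)^2 + c₁*(w.2-wh.1.2) + A*(w.2-wh.1.2)^2)) ≤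
          u wh.1 - ((1/ε)*(wh.1.1-wh.2.1)^2 + δ*(wh.1.1-pb.1)^2 +
            ((1/ε)*(wh.1.2-wh.2.2)^2 + δ*(wh.1.2-pb.2)^2 + c₁*(wh.1.2-wh.1.2) +
              A*(wh.1.2-wh.1.2)^2))
        have hz1 : c₁*(wh.1.2-wh.1.2) = 0 := by ring
        have hz2 : A*(wh.1.2-wh.1.2)^2 = 0 := by ring
        linarith [htay, hGw', hz1, hz2]
      exact hev
    have hvis := hsub.2 (fun w : ℝ×ℝ => P1 w.1 + Q1 w.2) hCD wh.1 hxU hlocmax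
    have hfd := fderiv_eval P1 Q1 (a+bz) (ee+bt+c₁) wh.1 hP1' hQ1'
    rw [hfd.1, hfd.2] at hvis
    exact hvis
  -- supersolution inequality
  have key2 : 0 ≤ ee + H wh.2 (v wh.2) a := by
    obtain ⟨P2, hP2def⟩ : ∃ f : ℝ → ℝ, f = fun z => (-(1/ε))*(z-wh.1.1)^2 := ⟨_, rfl⟩
    obtain ⟨Q2, hQ2def⟩ : ∃ f : ℝ → ℝ, f = fun t => (-(1/ε))*(t-wh.1.2)^2 := ⟨_, rfl⟩
    have hCD2 : ContDiff ℝ 2 (fun w : ℝ×ℝ => P2 w.1 + Q2 w.2) := by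
      rw [hP2def, hQ2def]; fun_prop
    have hP2' : HasDerivAt P2 a wh.2.1 := by
      rw [hP2def, hadef]
      convert hasDerivAt_quad (-(1/ε)) wh.1.1 wh.2.1 using 1 <;> ring
    have hQ2' : HasDerivAt Q2 ee wh.2.2 := by
      rw [hQ2def, heedef]
      convert hasDerivAt_quad (-(1/ε)) wh.1.2 wh.2.2 using 1 <;> ring
    have hlocmin : IsLocalMin (fun p : ℝ×ℝ => v p - (P2 p.1 + Q2 p.2)) wh.2 := by
      have hev : ∀ᶠ w in nhds wh.2,
          v wh.2 - (P2 wh.2.1 + Q2 wh.2.2) ≤ v w - (P2 w.1 + Q2 w.2) := by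
        filter_upwards [(hZ.prod isOpen_Ioo).mem_nhds hyU] with w hwU
        have hwK : w ∈ closure Z ×ˢ Icc (0:ℝ) T :=
          ⟨subset_closure hwU.1, Ioo_subset_Icc_self hwU.2⟩
        have hGw := hLmax wh.1 w hxK hwK hxT'
        rw [hG] at hGw
        have hGw' : u wh.1 - v w - η/(T-wh.1.2) - (1/ε)*Qd wh.1 w - δ*Qd wh.1 pb ≤
          u wh.1 - v wh.2 - η/(T-wh.1.2) - (1/ε)*Qd wh.1 wh.2 - δ*Qd wh.1 pb := hGw
        rw [Qd_def wh.1 w, Qd_def wh.1 wh.2] at hGw'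
        rw [hP2def, hQ2def]
        show v wh.2 - ((-(1/ε))*(wh.2.1-wh.1.1)^2 + (-(1/ε))*(wh.2.2-wh.1.2)^2) ≤
          v w - ((-(1/ε))*(w.1-wh.1.1)^2 + (-(1/ε))*(w.2-wh.1.2)^2)
        linarith [hGw']
      exact hev
    have hvis2 := hsup.2 (fun w : ℝ×ℝ => P2 w.1 + Q2 w.2) hCD2 wh.2 hyU hlocmin
    have hfd2 := fderiv_eval P2 Q2 a ee wh.2 hP2' hQ2'
    rw [hfd2.1, hfd2.2] at hvis2
    exact hvis2
  -- conclusion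
  have huvord : v wh.2 ≤ u wh.1 := by linarith
  have key3 : H wh.1 (v wh.2) (a+bz) ≤ H wh.1 (u wh.1) (a+bz) := hH3 wh.1 (a+bz) huvord
  have key4 := hω1 wh.1 wh.1 (v wh.2) (a+bz) a
  have harg : ‖wh.1 - wh.1‖ + |a+bz-a| = |bz| := by
    rw [sub_self, norm_zero, show a+bz-a = bz from by ring, zero_add]
  rw [harg] at key4
  have key5 := hω2 wh.1 wh.2 (v wh.2) a
  have hQpb : (wh.1.1-pb.1)^2 + (wh.1.2-pb.2)^2 ≤ 2*B'/δ := by rw [← Qd_def]; exact hQD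
  have h8 : δ*((wh.1.1-pb.1)^2 + (wh.1.2-pb.2)^2) ≤ 2*B' := by
    have h6 := mul_le_mul_of_nonneg_left hQpb hδ0.le
    have h7 : δ * (2*B'/δ) = 2*B' := by field_simp
    linarith
  have h8' : δ*((wh.1.2-pb.2)^2 + (wh.1.1-pb.1)^2) ≤ 2*B' := by linarith [h8]
  have hmμ : m ≤ μ := by rw [hmdef]; exact min_le_left _ _
  have hms : m ≤ s₁ := by rw [hmdef]; exact min_le_right _ _
  have hbzm : |bz| ≤ m := by
    apply sqle _ _ ?_ hm.le
    rw [hbzdef]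
    exact sq_bound2 δ B' (wh.1.1-pb.1) (wh.1.2-pb.2) m hδ0 h8 hδm
  have hbtm : |bt| ≤ m := by
    apply sqle _ _ ?_ hm.le
    rw [hbtdef]
    exact sq_bound2 δ B' (wh.1.2-pb.2) (wh.1.1-pb.1) m hδ0 h8' hδm
  have hbtμ : -μ ≤ bt := by have := (abs_le.mp hbtm).1; linarith
  have hωbz : ω |bz| ≤ ω s₁ := hωmono (le_trans hbzm hms)
  have hnorm : ‖wh.1 - wh.2‖ = max |wh.1.1-wh.2.1| |wh.1.2-wh.2.2| := by
    rw [Prod.norm_def]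
    simp [Real.norm_eq_abs]
  have hn1 : ‖wh.1-wh.2‖ ≤ e₁ := by rw [hnorm]; exact max_le hz ht2
  have hnsum : ‖wh.1-wh.2‖ ≤ |wh.1.1-wh.2.1| + |wh.1.2-wh.2.2| := by
    rw [hnorm]
    exact max_le (by linarith [abs_nonneg (wh.1.2-wh.2.2)])
      (by linarith [abs_nonneg (wh.1.1-wh.2.1)])
  have hn0 : 0 ≤ ‖wh.1-wh.2‖ := norm_nonneg _
  have hF1 : (1/ε)*Qd wh.1 wh.2 ≤ v wh.1 - v wh.2 := by
    have hGxx := hLmax wh.1 wh.1 hxK hxK hxT'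
    rw [hG] at hGxx
    have h' : u wh.1 - v wh.1 - η/(T-wh.1.2) - (1/ε)*Qd wh.1 wh.1 - δ*Qd wh.1 pb ≤
      u wh.1 - v wh.2 - η/(T-wh.1.2) - (1/ε)*Qd wh.1 wh.2 - δ*Qd wh.1 pb := hGxx
    rw [Qd_self, mul_zero] at h'
    linarith
  have hQρ : (1/ε)*Qd wh.1 wh.2 ≤ ρ := by
    have := le_abs_self (v wh.1 - v wh.2); linarith
  have hQρ' : (1/ε)*((wh.1.1-wh.2.1)^2 + (wh.1.2-wh.2.2)^2) ≤ ρ := by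
    rw [← Qd_def]; exact hQρ
  have hiε : (0:ℝ) ≤ 1/ε := by positivity
  have haprod : ‖wh.1-wh.2‖ * (2*(1/ε)*|wh.1.1-wh.2.1|) ≤ 3*ρ :=
    prod_bound _ _ _ _ _ hnsum hiε hQρ' hn0
  have haabs : |a| = 2*(1/ε)*|wh.1.1-wh.2.1| := by
    rw [hadef, abs_mul, abs_of_pos (show (0:ℝ) < 2*(1/ε) by positivity)]
  have harg2 : ‖wh.1-wh.2‖ * (1+|a|) ≤ s₁ := by
    have hsplit : ‖wh.1-wh.2‖*(1+|a|) = ‖wh.1-wh.2‖ + ‖wh.1-wh.2‖*|a| := by ring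
    rw [hsplit, haabs]
    linarith [haprod, hn1, he₁s, hρs]
  have hωarg2 : ω (‖wh.1-wh.2‖*(1+|a|)) ≤ ω s₁ := hωmono harg2
  have hc₁T : η/T^2 ≤ c₁ := by
    rw [hc₁def, div_le_div_iff₀ (by positivity) (by positivity)]
    exact c1bound η T wh.1.2 hη hxt0 hxT'
  have hμ4 : η/T^2 = 4*μ := by
    rw [hμdef]
    field_simp
  have k4a : H wh.1 (v wh.2) a - H wh.1 (v wh.2) (a+bz) ≤ ω |bz| := by
    have := (abs_le.mp key4).1; linarith
  have k5a : H wh.2 (v wh.2) a - H wh.1 (v wh.2) a ≤ ω (‖wh.1-wh.2‖*(1+|a|)) := by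
    have := (abs_le.mp key5).1; linarith
  linarith [key1, key2, key3, k4a, k5a, hωbz, hωarg2, hs₁ω, hbtμ, hc₁T, hμ4, hμ]

/-- Comparison Theorem (Dirichlet form): for a viscosity subsolution `u` and supersolution `v`
of `∂_t f + H((z,t), f, ∂_z f) = 0` on `𝒰 = 𝒵 × (0,T)`, the positive part of `u − v` on the
closure of `𝒰` is bounded by its supremum over `Γ = (∂𝒵 × [0,T]) ∪ (𝒵̄ × {0})`. -/
theorem stmt_2 (T : ℝ) (hT : 0 < T) (Z : Set ℝ) (hZ : IsOpen Z)
    (H : (ℝ × ℝ) → ℝ → ℝ → ℝ) (hH12 : SatisfiesR1R2 H) (hH3 : SatisfiesR3 H)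
    (u v : ℝ × ℝ → ℝ)
    (hub : ∃ M, ∀ p ∈ closure (Z ×ˢ Ioo (0 : ℝ) T), |u p| ≤ M)
    (hvb : ∃ M, ∀ p ∈ closure (Z ×ˢ Ioo (0 : ℝ) T), |v p| ≤ M)
    (huc : UniformContinuousOn u (closure (Z ×ˢ Ioo (0 : ℝ) T)))
    (hvc : UniformContinuousOn v (closure (Z ×ˢ Ioo (0 : ℝ) T)))
    (hsub : IsViscositySubsolnOn (fun y q p => p.2 + H y q p.1) u (Z ×ˢ Ioo (0 : ℝ) T))
    (hsup : IsViscositySupersolnOn (fun y q p => p.2 + H y q p.1) v (Z ×ˢ Ioo (0 : ℝ) T)) :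
    ∀ p ∈ closure (Z ×ˢ Ioo (0 : ℝ) T),
      max (u p - v p) 0 ≤
        ⨆ q : ((frontier Z ×ˢ Icc (0 : ℝ) T) ∪ (closure Z ×ˢ ({0} : Set ℝ)) : Set (ℝ × ℝ)),
          max (u ↑q - v ↑q) 0 := by
  intro p hp
  rcases eq_empty_or_nonempty Z with rfl | ⟨z₀, hz₀⟩
  · simp at hp
  have hKeq : closure (Z ×ˢ Ioo (0:ℝ) T) = closure Z ×ˢ Icc (0:ℝ) T := by
    rw [closure_prod_eq, closure_Ioo hT.ne]
  rw [hKeq] at hp hub hvb huc hvc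
  obtain ⟨Mu, hMu⟩ := hub
  obtain ⟨Mv, hMv⟩ := hvb
  have hMu' : ∀ q ∈ closure Z ×ˢ Icc (0:ℝ) T, |u q| ≤ Mu := hMu
  have hMv' : ∀ q ∈ closure Z ×ˢ Icc (0:ℝ) T, |v q| ≤ Mv := hMv
  have hΓsub : ((frontier Z ×ˢ Icc (0:ℝ) T) ∪ (closure Z ×ˢ ({0}:Set ℝ)))
      ⊆ closure Z ×ˢ Icc (0:ℝ) T := by
    rintro q (⟨h1, h2⟩ | ⟨h1, h2⟩)
    · exact ⟨frontier_subset_closure h1, h2⟩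
    · simp only [mem_singleton_iff] at h2
      exact ⟨h1, by rw [h2]; exact ⟨le_refl _, hT.le⟩⟩
  have hbdd : BddAbove (range fun q : ((frontier Z ×ˢ Icc (0:ℝ) T) ∪
      (closure Z ×ˢ ({0}:Set ℝ)) : Set (ℝ × ℝ)) => max (u ↑q - v ↑q) 0) := by
    refine ⟨max (Mu + Mv) 0, ?_⟩
    rintro x ⟨q, rfl⟩
    have hq := hΓsub q.2
    have h1 := (abs_le.mp (hMu' q hq)).2
    have h2 := (abs_le.mp (hMv' q hq)).1
    exact max_le_max (by linarith) le_rfl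
  set S : ℝ := ⨆ q : ((frontier Z ×ˢ Icc (0:ℝ) T) ∪
      (closure Z ×ˢ ({0}:Set ℝ)) : Set (ℝ × ℝ)), max (u ↑q - v ↑q) 0 with hSdef
  have hS : ∀ q ∈ (frontier Z ×ˢ Icc (0:ℝ) T) ∪ (closure Z ×ˢ ({0}:Set ℝ)),
      max (u q - v q) 0 ≤ S := fun q hq => le_ciSup hbdd ⟨q, hq⟩
  have hSΓ : ∀ q ∈ (frontier Z ×ˢ Icc (0:ℝ) T) ∪ (closure Z ×ˢ ({0}:Set ℝ)),
      u q - v q ≤ S := fun q hq => le_trans (le_max_left _ _) (hS q hq)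
  have hS0 : 0 ≤ S := by
    have h0 : ((z₀, 0) : ℝ×ℝ) ∈ (frontier Z ×ˢ Icc (0:ℝ) T) ∪
        (closure Z ×ˢ ({0}:Set ℝ)) := Or.inr ⟨subset_closure hz₀, rfl⟩
    exact le_trans (le_max_right _ _) (hS _ h0)
  have core := comparison_core T hT Z hZ H hH12 hH3 u v Mu Mv hMu' hMv' huc hvc hsub hsup
    S hS0 hSΓ
  have step1 : ∀ x ∈ closure Z ×ˢ Icc (0:ℝ) T, x.2 < T → u x - v x ≤ S := by
    intro x hx hxT
    by_contra hlt
    push_neg at hlt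
    have hTx : 0 < T - x.2 := by linarith
    obtain ⟨η, hηdef⟩ : ∃ y : ℝ, y = (u x - v x - S)*(T - x.2)/2 := ⟨_, rfl⟩
    have hη : 0 < η := by
      rw [hηdef]
      have : 0 < u x - v x - S := by linarith
      positivity
    have h := core η hη x hx hxT
    have heq : η/(T - x.2) = (u x - v x - S)/2 := by
      rw [hηdef]
      field_simp
    rw [heq] at h
    linarith
  have hp1 : p.1 ∈ closure Z := hp.1
  have hp2 : p.2 ∈ Icc (0:ℝ) T := hp.2
  apply max_le _ hS0
  by_cases hpT : p.2 < T
  · exact step1 p hp hpT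
  · have hpT' : p.2 = T := le_antisymm hp2.2 (not_lt.mp hpT)
    have hcont : ContinuousOn (fun q : ℝ×ℝ => u q - v q) (closure Z ×ˢ Icc (0:ℝ) T) :=
      huc.continuousOn.sub hvc.continuousOn
    have hγ : Continuous (fun t : ℝ => ((p.1, t) : ℝ×ℝ)) :=
      continuous_const.prodMk continuous_id
    have hmaps : MapsTo (fun t : ℝ => ((p.1, t):ℝ×ℝ)) (Ico (0:ℝ) T)
        (closure Z ×ˢ Icc (0:ℝ) T) := fun t ht => ⟨hp1, ⟨ht.1, ht.2.le⟩⟩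
    have hwA : ContinuousWithinAt (fun q : ℝ×ℝ => u q - v q)
        (closure Z ×ˢ Icc (0:ℝ) T) (p.1, T) :=
      hcont _ ⟨hp1, ⟨hT.le, le_refl T⟩⟩
    have hpath : ContinuousWithinAt (fun t : ℝ => u (p.1, t) - v (p.1, t)) (Ico 0 T) T :=
      hwA.comp hγ.continuousWithinAt hmaps
    haveI hne : (nhdsWithin T (Ico (0:ℝ) T)).NeBot := by
      apply mem_closure_iff_nhdsWithin_neBot.mp
      rw [closure_Ico hT.ne]
      exact ⟨hT.le, le_refl T⟩
    have hev : ∀ᶠ t in nhdsWithin T (Ico (0:ℝ) T), u (p.1,t) - v (p.1,t) ≤ S := by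
      filter_upwards [self_mem_nhdsWithin] with t ht
      exact step1 (p.1, t) ⟨hp1, ⟨ht.1, ht.2.le⟩⟩ ht.2
    have hlimle : u (p.1, T) - v (p.1, T) ≤ S := le_of_tendsto hpath hev
    have hpeq : ((p.1, T) : ℝ×ℝ) = p := by rw [← hpT']
    rwa [hpeq] at hlimle
end

section
/- Let t₀ ∈ ℝ and β ≥ 0. Suppose H : ℝ² × ℝ × ℝ → ℝ satisfies conditions (R1)–(R2) and the monotonicity condition H((z,t), r, p) − H((z,t), s, p) ≥ β·(r − s) for all (z,t), p and all r ≥ s. Let u, v : ℝ² → ℝ be bounded and uniformly continuous on ℝ × [t₀, ∞), with u a viscosity subsolution and v a viscosity supersolution on ℝ × (t₀, ∞) of ∂_t f + H((z,t), f, ∂_z f) = 0. Then for every t ≥ t₀, e^{β(t − t₀)} · sup_{z ∈ ℝ} (u(z,t) − v(z,t))₊ ≤ sup_{z ∈ ℝ} (u(z, t₀) − v(z, t₀))₊, where (a)₊ := max{a, 0}. -/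
open Set Filter


private lemma hasDerivAt_of_eq {f : ℝ → ℝ} {f' g' x : ℝ} (h : HasDerivAt f f' x)
    (he : f' = g') : HasDerivAt f g' x := he ▸ h

private lemma small_mul' {C b : ℝ} (hC : 0 ≤ C) (hb : 0 < b) {e : ℝ} (he : 0 ≤ e)
    (hle : e ≤ b / (2 * (C + 1))) : C * e < b := by
  have h1 : C * e ≤ C * (b / (2 * (C + 1))) := mul_le_mul_of_nonneg_left hle hC
  have h2 : C * (b / (2 * (C + 1))) < b := by
    rw [mul_div_assoc', div_lt_iff₀ (by positivity)]
    nlinarith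
  linarith

private lemma sq_div_le {x Bv e : ℝ} (he : 0 < e) (hB : 0 ≤ Bv) (h : x ^ 2 / e ^ 2 ≤ Bv) :
    |x| ≤ Real.sqrt Bv * e := by
  rw [div_le_iff₀ (by positivity)] at h
  rw [← Real.sqrt_sq_eq_abs]
  calc Real.sqrt (x ^ 2) ≤ Real.sqrt (Bv * e ^ 2) := Real.sqrt_le_sqrt h
    _ = Real.sqrt Bv * e := by rw [Real.sqrt_mul hB, Real.sqrt_sq he.le]


lemma sep_contDiff {f g : ℝ → ℝ} (hf : ContDiff ℝ 2 f) (hg : ContDiff ℝ 2 g) :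
    ContDiff ℝ 2 (fun p : ℝ × ℝ => f p.1 + g p.2) :=
  (hf.comp contDiff_fst).add (hg.comp contDiff_snd)

lemma sep_fderiv {f g : ℝ → ℝ} {f' g' : ℝ} {y : ℝ × ℝ}
    (hf : HasDerivAt f f' y.1) (hg : HasDerivAt g g' y.2) :
    fderiv ℝ (fun p : ℝ × ℝ => f p.1 + g p.2) y (1, 0) = f' ∧
    fderiv ℝ (fun p : ℝ × ℝ => f p.1 + g p.2) y (0, 1) = g' := by
  have h1 : HasFDerivAt (fun p : ℝ × ℝ => f p.1)
      ((ContinuousLinearMap.smulRight (1 : ℝ →L[ℝ] ℝ) f').comp (ContinuousLinearMap.fst ℝ ℝ ℝ)) y :=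
    hf.hasFDerivAt.comp y hasFDerivAt_fst
  have h2 : HasFDerivAt (fun p : ℝ × ℝ => g p.2)
      ((ContinuousLinearMap.smulRight (1 : ℝ →L[ℝ] ℝ) g').comp (ContinuousLinearMap.snd ℝ ℝ ℝ)) y :=
    hg.hasFDerivAt.comp y hasFDerivAt_snd
  have h : fderiv ℝ (fun p : ℝ × ℝ => f p.1 + g p.2) y = _ := (h1.add h2).fderiv
  rw [h]
  constructor <;> simp

noncomputable def Lfun (z : ℝ) : ℝ := Real.log (1 + z ^ 2)

lemma Lfun_hasDerivAt (z : ℝ) : HasDerivAt Lfun (2 * z / (1 + z ^ 2)) z := by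
  have h : HasDerivAt (fun z : ℝ => 1 + z ^ 2) (2 * z) z := by
    simpa using (((hasDerivAt_id z).pow 2).const_add 1)
  exact h.log (by positivity)

lemma Lfun_contDiff : ContDiff ℝ 2 Lfun := by
  rw [contDiff_iff_contDiffAt]
  intro z
  exact (Real.contDiffAt_log.mpr (by positivity : (1:ℝ) + z ^ 2 ≠ 0)).comp z
    (by fun_prop : ContDiffAt ℝ 2 (fun z : ℝ => 1 + z ^ 2) z)

lemma Lfun_nonneg (z : ℝ) : 0 ≤ Lfun z := Real.log_nonneg (by nlinarith [sq_nonneg z])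

lemma Lfun_deriv_bound (z : ℝ) : |2 * z / (1 + z ^ 2)| ≤ 1 := by
  rw [abs_div, abs_of_pos (by positivity : (0:ℝ) < 1 + z ^ 2), div_le_one (by positivity)]
  have := sq_nonneg (|z| - 1)
  have : |2 * z| = 2 * |z| := by rw [abs_mul]; norm_num
  rw [this]
  nlinarith [sq_abs z, sq_nonneg (|z| - 1)]

lemma Lfun_le_bound {z B α : ℝ} (hα : 0 < α) (h : α * Lfun z ≤ B) : |z| ≤ Real.exp (B / α) := by
  have h1 : Lfun z ≤ B / α := by rwa [le_div_iff₀ hα, mul_comm]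
  have h2 : 1 + z ^ 2 ≤ Real.exp (B / α) := by
    have := Real.exp_log (by positivity : (0:ℝ) < 1 + z ^ 2)
    calc 1 + z ^ 2 = Real.exp (Lfun z) := this.symm
      _ ≤ Real.exp (B / α) := Real.exp_le_exp.mpr h1
  nlinarith [sq_nonneg (|z| - 1), sq_abs z, abs_nonneg z]

set_option maxHeartbeats 4000000 in
/-- Lemma A.5 (strong comparison for Cauchy problems, Crandall–Lions): if `H` satisfies
(R1)–(R2) and the `β`-monotonicity condition, `u` is a viscosity subsolution and `v` a
viscosity supersolution of `∂_t f + H((z,t), f, ∂_z f) = 0` on `ℝ × (t₀,∞)`, both bounded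
and uniformly continuous on `ℝ × [t₀,∞)`, then for every `t ≥ t₀`,
`e^{β(t−t₀)} sup_z (u(z,t) − v(z,t))₊ ≤ sup_z (u(z,t₀) − v(z,t₀))₊`. -/
theorem stmt_6 (t₀ β : ℝ) (hβ : 0 ≤ β)
    (H : (ℝ × ℝ) → ℝ → ℝ → ℝ) (hH : SatisfiesR1R2 H)
    (hmono : ∀ (y : ℝ × ℝ) (p r s : ℝ), s ≤ r → β * (r - s) ≤ H y r p - H y s p)
    (u v : ℝ × ℝ → ℝ)
    (hub : ∃ M, ∀ p ∈ (univ ×ˢ Ici t₀ : Set (ℝ × ℝ)), |u p| ≤ M)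
    (hvb : ∃ M, ∀ p ∈ (univ ×ˢ Ici t₀ : Set (ℝ × ℝ)), |v p| ≤ M)
    (huc : UniformContinuousOn u (univ ×ˢ Ici t₀))
    (hvc : UniformContinuousOn v (univ ×ˢ Ici t₀))
    (hsub : IsViscositySubsolnOn (fun y q p => p.2 + H y q p.1) u (univ ×ˢ Ioi t₀))
    (hsup : IsViscositySupersolnOn (fun y q p => p.2 + H y q p.1) v (univ ×ˢ Ioi t₀)) :
    ∀ t, t₀ ≤ t → ∀ z : ℝ,
      Real.exp (β * (t - t₀)) * max (u (z, t) - v (z, t)) 0 ≤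
        ⨆ z' : ℝ, max (u (z', t₀) - v (z', t₀)) 0 := by
  obtain ⟨Mu, hMu⟩ := hub
  obtain ⟨Mv, hMv⟩ := hvb
  have hmem0 : ∀ z s : ℝ, t₀ ≤ s → ((z, s) : ℝ × ℝ) ∈ (univ ×ˢ Ici t₀ : Set (ℝ × ℝ)) :=
    fun z s hs => Set.mem_prod.mpr ⟨trivial, hs⟩
  have hMu0 : 0 ≤ Mu := le_trans (abs_nonneg _) (hMu (0, t₀) (hmem0 0 t₀ le_rfl))
  have hMv0 : 0 ≤ Mv := le_trans (abs_nonneg _) (hMv (0, t₀) (hmem0 0 t₀ le_rfl))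
  set A := ⨆ z' : ℝ, max (u (z', t₀) - v (z', t₀)) 0 with hAdef
  have hbdd : BddAbove (range fun z' : ℝ => max (u (z', t₀) - v (z', t₀)) 0) := by
    refine ⟨Mu + Mv, ?_⟩
    rintro x ⟨z', rfl⟩
    have h1 := abs_le.mp (hMu (z', t₀) (hmem0 z' t₀ le_rfl))
    have h2 := abs_le.mp (hMv (z', t₀) (hmem0 z' t₀ le_rfl))
    exact max_le (by linarith) (by linarith)
  have hAub : ∀ z : ℝ, u (z, t₀) - v (z, t₀) ≤ A :=
    fun z => le_trans (le_max_left _ _) (le_ciSup hbdd z)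
  have hA0 : 0 ≤ A := le_trans (le_max_right _ _) (le_ciSup hbdd 0)
  -- the key claim
  have key : ∀ s, t₀ ≤ s → ∀ z : ℝ, u (z, s) - v (z, s) ≤ A * Real.exp (-β * (s - t₀)) := by
    by_contra hcon
    push_neg at hcon
    obtain ⟨s₀, hs₀, z₀, hlt⟩ := hcon
    set δ := u (z₀, s₀) - v (z₀, s₀) - A * Real.exp (-β * (s₀ - t₀)) with hδdef
    have hδ : 0 < δ := by simp only [hδdef]; linarith
    set η := δ / (4 * (s₀ - t₀ + 1)) with hηdef
    have hs₀' : 0 ≤ s₀ - t₀ := by linarith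
    have hη : 0 < η := by positivity
    have hη1 : η * (s₀ - t₀) ≤ δ / 4 := by
      rw [hηdef, div_mul_eq_mul_div, div_le_div_iff₀ (by positivity) (by norm_num : (0:ℝ) < 4)]
      nlinarith
    obtain ⟨hR1, ω, ⟨hωmono, hω0, hωpos, hωtend⟩, hR2a, hR2b⟩ := hH
    -- extract a threshold for ω
    have hev : ω ⁻¹' Iio (η / 4) ∈ nhdsWithin 0 (Ioi 0) :=
      hωtend (Iio_mem_nhds (by positivity))
    rw [mem_nhdsWithin] at hev
    obtain ⟨U, hUopen, hU0, hUsub⟩ := hev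
    obtain ⟨α₀, hα₀pos, hα₀ball⟩ := Metric.isOpen_iff.mp hUopen 0 hU0
    have hωsmall : ∀ s : ℝ, 0 ≤ s → s < α₀ → ω s < η / 4 := by
      intro s h0 h1
      rcases eq_or_lt_of_le h0 with rfl | h0'
      · rw [hω0]; positivity
      · exact hUsub ⟨hα₀ball (by simp [Real.dist_eq, abs_of_pos h0', h1] :
          s ∈ Metric.ball (0:ℝ) α₀), h0'⟩
    -- choose α
    have hLz₀ := Lfun_nonneg z₀
    set α := min (min 1 (α₀ / 2)) (δ / (8 * (Lfun z₀ + 1))) with hαdef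
    have hα : 0 < α := by
      apply lt_min (lt_min one_pos (by positivity))
      positivity
    have hα1 : α ≤ 1 := le_trans (min_le_left _ _) (min_le_left _ _)
    have hαα₀ : α < α₀ := lt_of_le_of_lt (le_trans (min_le_left _ _) (min_le_right _ _))
      (by linarith)
    have hα2 : α * (Lfun z₀ + Lfun z₀) ≤ δ / 4 := by
      have hαle : α ≤ δ / (8 * (Lfun z₀ + 1)) := min_le_right _ _
      have hq0 : (0:ℝ) ≤ δ / (8 * (Lfun z₀ + 1)) := by positivity
      have hqd : δ / (8 * (Lfun z₀ + 1)) * (8 * (Lfun z₀ + 1)) = δ :=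
        div_mul_cancel₀ _ (by positivity)
      nlinarith [mul_le_mul_of_nonneg_right hαle (by linarith : (0:ℝ) ≤ Lfun z₀ + Lfun z₀)]
    -- uniform continuity thresholds
    obtain ⟨δu, hδu, hucu⟩ := Metric.uniformContinuousOn_iff.mp huc (δ / 4) (by positivity)
    obtain ⟨δv, hδv, hucv⟩ := Metric.uniformContinuousOn_iff.mp hvc (δ / 4) (by positivity)
    -- choose ε
    set C := Real.sqrt (Mu + Mv) with hCdef
    have hC0 : 0 ≤ C := Real.sqrt_nonneg _
    have hAβC : 0 ≤ A * β * C := mul_nonneg (mul_nonneg hA0 hβ) hC0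
    set ε := min (min (α₀ / (2 * (C + 1))) (δu / (2 * (C + 1))))
      (min (δv / (2 * (C + 1))) ((δ / 4) / (2 * (A * β * C + 1)))) with hεdef
    have hε : 0 < ε := by
      apply lt_min (lt_min (by positivity) (by positivity))
      exact lt_min (by positivity) (by positivity)
    have hCεα₀ : C * ε < α₀ :=
      small_mul' hC0 hα₀pos hε.le (le_trans (min_le_left _ _) (min_le_left _ _))
    have hCεδu : C * ε < δu :=
      small_mul' hC0 hδu hε.le (le_trans (min_le_left _ _) (min_le_right _ _))
    have hCεδv : C * ε < δv :=
      small_mul' hC0 hδv hε.le (le_trans (min_le_right _ _) (min_le_left _ _))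
    have hCεAβ : A * β * C * ε < δ / 4 :=
      small_mul' hAβC (by positivity) hε.le (le_trans (min_le_right _ _) (min_le_right _ _))
    -- the doubled functional
    set K := δ / 2 with hKdef
    have hK0 : 0 < K := by positivity
    set Φ : (ℝ × ℝ) × ℝ × ℝ → ℝ := fun x =>
      u x.1 - v x.2 - (A * Real.exp (-β * (x.1.2 - t₀)) + η * (x.1.2 - t₀)
        + (x.1.1 - x.2.1) ^ 2 / ε ^ 2 + (x.1.2 - x.2.2) ^ 2 / ε ^ 2
        + α * (Lfun x.1.1 + Lfun x.2.1)) with hΦdef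
    set D : Set ((ℝ × ℝ) × ℝ × ℝ) := (univ ×ˢ Ici t₀) ×ˢ (univ ×ˢ Ici t₀) with hDdef
    have hmemD : ∀ p q : ℝ × ℝ, t₀ ≤ p.2 → t₀ ≤ q.2 → (p, q) ∈ D := by
      intro p q hp hq
      exact Set.mem_prod.mpr ⟨Set.mem_prod.mpr ⟨trivial, hp⟩, Set.mem_prod.mpr ⟨trivial, hq⟩⟩
    have hx₀D : (((z₀, s₀), (z₀, s₀)) : (ℝ × ℝ) × ℝ × ℝ) ∈ D := hmemD _ _ hs₀ hs₀
    have hΦx₀ : K ≤ Φ ((z₀, s₀), (z₀, s₀)) := by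
      show δ / 2 ≤ u (z₀, s₀) - v (z₀, s₀) - (A * Real.exp (-β * (s₀ - t₀)) + η * (s₀ - t₀)
        + (z₀ - z₀) ^ 2 / ε ^ 2 + (s₀ - s₀) ^ 2 / ε ^ 2 + α * (Lfun z₀ + Lfun z₀))
      have h00 : (z₀ - z₀) ^ 2 / ε ^ 2 = 0 := by simp
      have h01 : (s₀ - s₀) ^ 2 / ε ^ 2 = 0 := by simp
      rw [h00, h01]
      have hδeq : u (z₀, s₀) - v (z₀, s₀) - A * Real.exp (-β * (s₀ - t₀)) = δ := rfl
      linarith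
    -- continuity of Φ on D
    have hucont : ContinuousOn u (univ ×ˢ Ici t₀) := huc.continuousOn
    have hvcont : ContinuousOn v (univ ×ˢ Ici t₀) := hvc.continuousOn
    have hDclosed : IsClosed D :=
      (isClosed_univ.prod isClosed_Ici).prod (isClosed_univ.prod isClosed_Ici)
    have hΦcont : ContinuousOn Φ D := by
      have c1 : ContinuousOn (fun x : (ℝ × ℝ) × ℝ × ℝ => u x.1) D :=
        hucont.comp continuous_fst.continuousOn (fun x hx => hx.1)
      have c2 : ContinuousOn (fun x : (ℝ × ℝ) × ℝ × ℝ => v x.2) D :=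
        hvcont.comp continuous_snd.continuousOn (fun x hx => hx.2)
      have hLc : Continuous Lfun := Lfun_contDiff.continuous
      have c3 : Continuous (fun x : (ℝ × ℝ) × ℝ × ℝ =>
          A * Real.exp (-β * (x.1.2 - t₀)) + η * (x.1.2 - t₀)
            + (x.1.1 - x.2.1) ^ 2 / ε ^ 2 + (x.1.2 - x.2.2) ^ 2 / ε ^ 2
            + α * (Lfun x.1.1 + Lfun x.2.1)) := by fun_prop
      exact (c1.sub c2).sub c3.continuousOn
    -- the sup is attained
    set S := D ∩ Φ ⁻¹' Ici K with hSdef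
    have hSclosed : IsClosed S := hΦcont.preimage_isClosed_of_isClosed hDclosed isClosed_Ici
    have hSbounded : Bornology.IsBounded S := by
      set r1 := Real.exp ((Mu + Mv) / α) with hr1
      set r2 := t₀ + (Mu + Mv) / η with hr2
      set r3 := t₀ + (Mu + Mv) / η + C * ε with hr3
      have hsub : S ⊆ (Icc (-r1) r1 ×ˢ Icc t₀ r2) ×ˢ (Icc (-r1) r1 ×ˢ Icc t₀ r3) := by
        rintro ⟨⟨a, b⟩, c, d⟩ ⟨hxD, hxK⟩
        have hb : t₀ ≤ b := hxD.1.2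
        have hd : t₀ ≤ d := hxD.2.2
        have hxK' : K ≤ u (a, b) - v (c, d) - (A * Real.exp (-β * (b - t₀)) + η * (b - t₀)
            + (a - c) ^ 2 / ε ^ 2 + (b - d) ^ 2 / ε ^ 2 + α * (Lfun a + Lfun c)) := hxK
        have huv : u (a, b) - v (c, d) ≤ Mu + Mv := by
          have h1 := abs_le.mp (hMu (a, b) (hmem0 a b hb))
          have h2 := abs_le.mp (hMv (c, d) (hmem0 c d hd))
          linarith
        have hT1 : 0 ≤ A * Real.exp (-β * (b - t₀)) :=
          mul_nonneg hA0 (Real.exp_nonneg _)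
        have hT2 : 0 ≤ η * (b - t₀) := mul_nonneg hη.le (by linarith)
        have hT3 : 0 ≤ (a - c) ^ 2 / ε ^ 2 := by positivity
        have hT4 : 0 ≤ (b - d) ^ 2 / ε ^ 2 := by positivity
        have hLa := Lfun_nonneg a
        have hLc := Lfun_nonneg c
        have hT5 : 0 ≤ α * (Lfun a + Lfun c) := mul_nonneg hα.le (by linarith)
        -- individual bounds
        have hba : b ≤ r2 := by
          have : η * (b - t₀) ≤ Mu + Mv := by linarith
          rw [hr2]
          have := (le_div_iff₀' hη).mpr this
          linarith
        have hT5b : α * (Lfun a + Lfun c) ≤ Mu + Mv := by linarith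
        have haa : |a| ≤ r1 := Lfun_le_bound hα (le_trans (mul_le_mul_of_nonneg_left
          (le_add_of_nonneg_right hLc) hα.le) hT5b)
        have hcc : |c| ≤ r1 := Lfun_le_bound hα (le_trans (mul_le_mul_of_nonneg_left
          (le_add_of_nonneg_left hLa) hα.le) hT5b)
        have hbd : |b - d| ≤ C * ε := by
          apply sq_div_le hε (by linarith : (0:ℝ) ≤ Mu + Mv)
          linarith
        have hda : d ≤ r3 := by
          have h5 := (abs_le.mp hbd).1
          rw [hr2] at hba
          rw [hr3]
          linarith
        have h1 := abs_le.mp haa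
        have h2 := abs_le.mp hcc
        exact ⟨⟨⟨h1.1, h1.2⟩, hb, hba⟩, ⟨h2.1, h2.2⟩, hd, hda⟩
      exact (((Metric.isBounded_Icc _ _).prod (Metric.isBounded_Icc _ _)).prod
        ((Metric.isBounded_Icc _ _).prod (Metric.isBounded_Icc _ _))).subset hsub
    have hSne : S.Nonempty := ⟨((z₀, s₀), (z₀, s₀)), hx₀D, hΦx₀⟩
    obtain ⟨⟨⟨z1, s1⟩, z2, s2⟩, hbS, hbmax⟩ :=
      (Metric.isCompact_of_isClosed_isBounded hSclosed hSbounded).exists_isMaxOn hSne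
        (hΦcont.mono inter_subset_left)
    have hglob : ∀ x ∈ D, Φ x ≤ Φ ((z1, s1), (z2, s2)) := by
      intro x hx
      rcases le_or_gt K (Φ x) with h | h
      · exact hbmax ⟨hx, h⟩
      · exact h.le.trans hbS.2
    -- consequences of maximality
    have hs1 : t₀ ≤ s1 := hbS.1.1.2
    have hs2 : t₀ ≤ s2 := hbS.1.2.2
    have hKe : K ≤ u (z1, s1) - v (z2, s2) - (A * Real.exp (-β * (s1 - t₀)) + η * (s1 - t₀)
        + (z1 - z2) ^ 2 / ε ^ 2 + (s1 - s2) ^ 2 / ε ^ 2 + α * (Lfun z1 + Lfun z2)) := hbS.2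
    have hT1 : 0 ≤ A * Real.exp (-β * (s1 - t₀)) := mul_nonneg hA0 (Real.exp_nonneg _)
    have hT2 : 0 ≤ η * (s1 - t₀) := mul_nonneg hη.le (by linarith)
    have hT3 : 0 ≤ (z1 - z2) ^ 2 / ε ^ 2 := by positivity
    have hT4 : 0 ≤ (s1 - s2) ^ 2 / ε ^ 2 := by positivity
    have hT5 : 0 ≤ α * (Lfun z1 + Lfun z2) :=
      mul_nonneg hα.le (by linarith [Lfun_nonneg z1, Lfun_nonneg z2])
    have huvb : u (z1, s1) - v (z2, s2) ≤ Mu + Mv := by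
      have h1 := abs_le.mp (hMu (z1, s1) (hmem0 z1 s1 hs1))
      have h2 := abs_le.mp (hMv (z2, s2) (hmem0 z2 s2 hs2))
      linarith
    have hzz : |z1 - z2| ≤ C * ε := by
      apply sq_div_le hε (by linarith : (0:ℝ) ≤ Mu + Mv); linarith
    have hss : |s1 - s2| ≤ C * ε := by
      apply sq_div_le hε (by linarith : (0:ℝ) ≤ Mu + Mv); linarith
    have hgap : A * Real.exp (-β * (s1 - t₀)) + K ≤ u (z1, s1) - v (z2, s2) := by linarith
    have hKd : K = δ / 2 := rfl
    -- the max point has both times strictly above t₀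
    have hs1t : t₀ < s1 := by
      rcases eq_or_lt_of_le hs1 with heq | hlt'
      · exfalso
        rw [← heq] at hgap hss
        have hE1 : (-β * (t₀ - t₀)) = 0 := by ring
        rw [hE1, Real.exp_zero, mul_one] at hgap
        have hd : dist ((z1, t₀) : ℝ × ℝ) ((z2, s2) : ℝ × ℝ) < δv := by
          rw [Prod.dist_eq]
          apply max_lt
          · rw [Real.dist_eq]; exact lt_of_le_of_lt hzz hCεδv
          · rw [Real.dist_eq]; exact lt_of_le_of_lt hss hCεδv
        have h6 := hucv (z1, t₀) (hmem0 z1 t₀ le_rfl) (z2, s2) (hmem0 z2 s2 hs2) hd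
        rw [Real.dist_eq] at h6
        have h7 := abs_lt.mp h6
        have h8 := hAub z1
        linarith
      · exact hlt'
    have hs2t : t₀ < s2 := by
      rcases eq_or_lt_of_le hs2 with heq | hlt'
      · exfalso
        rw [← heq] at hgap hss
        have hd : dist ((z1, s1) : ℝ × ℝ) ((z2, t₀) : ℝ × ℝ) < δu := by
          rw [Prod.dist_eq]
          apply max_lt
          · rw [Real.dist_eq]; exact lt_of_le_of_lt hzz hCεδu
          · rw [Real.dist_eq]; exact lt_of_le_of_lt hss hCεδu
        have h6 := hucu (z1, s1) (hmem0 z1 s1 hs1) (z2, t₀) (hmem0 z2 t₀ le_rfl) hd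
        rw [Real.dist_eq] at h6
        have h7 := abs_lt.mp h6
        have h8 := hAub z2
        have h9 : -β * (s1 - t₀) + 1 ≤ Real.exp (-β * (s1 - t₀)) := Real.add_one_le_exp _
        have h10 : A * (1 - Real.exp (-β * (s1 - t₀))) ≤ A * (β * (s1 - t₀)) :=
          mul_le_mul_of_nonneg_left (by linarith) hA0
        have h11 : s1 - t₀ ≤ C * ε := le_trans (le_abs_self _) hss
        have h12 : A * (β * (s1 - t₀)) ≤ A * (β * (C * ε)) :=
          mul_le_mul_of_nonneg_left (mul_le_mul_of_nonneg_left h11 hβ) hA0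
        have h13 : A * (β * (C * ε)) = A * β * C * ε := by ring
        linarith
      · exact hlt'
    -- test function derivatives
    have hf' : HasDerivAt (fun z : ℝ => (z - z2) ^ 2 / ε ^ 2 + α * Lfun z) (2 * (z1 - z2) / ε ^ 2 + α * (2 * z1 / (1 + z1 ^ 2))) z1 := by
      have h0 := ((hasDerivAt_id z1).sub_const z2).pow 2
      have h1 := h0.div_const (ε ^ 2)
      exact hasDerivAt_of_eq (h1.add ((Lfun_hasDerivAt z1).const_mul α)) (by simp only [id_eq]; push_cast; ring)
    have hg' : HasDerivAt (fun s : ℝ => A * Real.exp (-β * (s - t₀)) + (η * (s - t₀) + (s - s2) ^ 2 / ε ^ 2)) (η + 2 * (s1 - s2) / ε ^ 2 - β * A * Real.exp (-β * (s1 - t₀))) s1 := by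
      have hlin : HasDerivAt (fun s : ℝ => -β * (s - t₀)) (-β) s1 := by
        simpa using ((hasDerivAt_id s1).sub_const t₀).const_mul (-β)
      have h1 := hlin.exp.const_mul A
      have h2 : HasDerivAt (fun s : ℝ => η * (s - t₀)) η s1 := by
        simpa using ((hasDerivAt_id s1).sub_const t₀).const_mul η
      have h3 := (((hasDerivAt_id s1).sub_const s2).pow 2).div_const (ε ^ 2)
      exact hasDerivAt_of_eq (h1.add (h2.add h3)) (by simp only [id_eq]; push_cast; ring)
    have hfh' : HasDerivAt (fun z : ℝ => -((z1 - z) ^ 2 / ε ^ 2) - α * Lfun z) (2 * (z1 - z2) / ε ^ 2 - α * (2 * z2 / (1 + z2 ^ 2))) z2 := by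
      have h0 := (((hasDerivAt_const z2 z1).sub (hasDerivAt_id z2)).pow 2).div_const (ε ^ 2)
      exact hasDerivAt_of_eq (h0.neg.sub ((Lfun_hasDerivAt z2).const_mul α)) (by simp only [Pi.sub_apply, id_eq]; push_cast; ring)
    have hgh' : HasDerivAt (fun s : ℝ => -((s1 - s) ^ 2 / ε ^ 2)) (2 * (s1 - s2) / ε ^ 2) s2 := by
      have h0 := (((hasDerivAt_const s2 s1).sub (hasDerivAt_id s2)).pow 2).div_const (ε ^ 2)
      exact hasDerivAt_of_eq h0.neg (by simp only [Pi.sub_apply, id_eq]; push_cast; ring)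
    have hfc : ContDiff ℝ 2 (fun z : ℝ => (z - z2) ^ 2 / ε ^ 2 + α * Lfun z) :=
      (((contDiff_id.sub contDiff_const).pow 2).div_const _).add
        (contDiff_const.mul Lfun_contDiff)
    have hgc : ContDiff ℝ 2 (fun s : ℝ => A * Real.exp (-β * (s - t₀)) + (η * (s - t₀) + (s - s2) ^ 2 / ε ^ 2)) := by
      apply ContDiff.add
      · exact contDiff_const.mul (Real.contDiff_exp.comp
          (contDiff_const.mul (contDiff_id.sub contDiff_const)))
      · exact (contDiff_const.mul (contDiff_id.sub contDiff_const)).add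
          (((contDiff_id.sub contDiff_const).pow 2).div_const _)
    have hfhc : ContDiff ℝ 2 (fun z : ℝ => -((z1 - z) ^ 2 / ε ^ 2) - α * Lfun z) :=
      ((((contDiff_const.sub contDiff_id).pow 2).div_const _).neg).sub
        (contDiff_const.mul Lfun_contDiff)
    have hghc : ContDiff ℝ 2 (fun s : ℝ => -((s1 - s) ^ 2 / ε ^ 2)) :=
      (((contDiff_const.sub contDiff_id).pow 2).div_const _).neg
    -- local max for the subsolution test
    have hmax : IsLocalMax (fun p : ℝ × ℝ => u p - (fun p : ℝ × ℝ => (fun z : ℝ => (z - z2) ^ 2 / ε ^ 2 + α * Lfun z) p.1 + (fun s : ℝ => A * Real.exp (-β * (s - t₀)) + (η * (s - t₀) + (s - s2) ^ 2 / ε ^ 2)) p.2) p) (z1, s1) := by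
      have hball : Metric.ball ((z1, s1) : ℝ × ℝ) (s1 - t₀) ∈ nhds ((z1, s1) : ℝ × ℝ) :=
        Metric.ball_mem_nhds _ (by linarith)
      filter_upwards [hball] with p hp
      rw [Metric.mem_ball, Prod.dist_eq] at hp
      have hp2 : |p.2 - s1| < s1 - t₀ := by
        rw [← Real.dist_eq]; exact lt_of_le_of_lt (le_max_right _ _) hp
      have hpt : t₀ < p.2 := by
        have := abs_lt.mp hp2; linarith
      have hΦle := hglob (p, (z2, s2)) (hmemD _ _ hpt.le hs2)
      have e1 : Φ (p, (z2, s2)) = u p - v (z2, s2) - (A * Real.exp (-β * (p.2 - t₀))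
          + η * (p.2 - t₀) + (p.1 - z2) ^ 2 / ε ^ 2 + (p.2 - s2) ^ 2 / ε ^ 2
          + α * (Lfun p.1 + Lfun z2)) := rfl
      have e2 : Φ ((z1, s1), (z2, s2)) = u (z1, s1) - v (z2, s2) - (A * Real.exp (-β * (s1 - t₀))
          + η * (s1 - t₀) + (z1 - z2) ^ 2 / ε ^ 2 + (s1 - s2) ^ 2 / ε ^ 2
          + α * (Lfun z1 + Lfun z2)) := rfl
      rw [e1, e2] at hΦle
      show u p - ((fun z : ℝ => (z - z2) ^ 2 / ε ^ 2 + α * Lfun z) p.1 + (fun s : ℝ => A * Real.exp (-β * (s - t₀)) + (η * (s - t₀) + (s - s2) ^ 2 / ε ^ 2)) p.2) ≤ u (z1, s1) - ((fun z : ℝ => (z - z2) ^ 2 / ε ^ 2 + α * Lfun z) z1 + (fun s : ℝ => A * Real.exp (-β * (s - t₀)) + (η * (s - t₀) + (s - s2) ^ 2 / ε ^ 2)) s1)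
      simp only
      linarith
    -- local min for the supersolution test
    have hmin : IsLocalMin (fun p : ℝ × ℝ => v p - (fun p : ℝ × ℝ => (fun z : ℝ => -((z1 - z) ^ 2 / ε ^ 2) - α * Lfun z) p.1 + (fun s : ℝ => -((s1 - s) ^ 2 / ε ^ 2)) p.2) p) (z2, s2) := by
      have hball : Metric.ball ((z2, s2) : ℝ × ℝ) (s2 - t₀) ∈ nhds ((z2, s2) : ℝ × ℝ) :=
        Metric.ball_mem_nhds _ (by linarith)
      filter_upwards [hball] with p hp
      rw [Metric.mem_ball, Prod.dist_eq] at hp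
      have hp2 : |p.2 - s2| < s2 - t₀ := by
        rw [← Real.dist_eq]; exact lt_of_le_of_lt (le_max_right _ _) hp
      have hpt : t₀ < p.2 := by
        have := abs_lt.mp hp2; linarith
      have hΦle := hglob ((z1, s1), p) (hmemD _ _ hs1 hpt.le)
      have e1 : Φ ((z1, s1), p) = u (z1, s1) - v p - (A * Real.exp (-β * (s1 - t₀))
          + η * (s1 - t₀) + (z1 - p.1) ^ 2 / ε ^ 2 + (s1 - p.2) ^ 2 / ε ^ 2
          + α * (Lfun z1 + Lfun p.1)) := rfl
      have e2 : Φ ((z1, s1), (z2, s2)) = u (z1, s1) - v (z2, s2) - (A * Real.exp (-β * (s1 - t₀))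
          + η * (s1 - t₀) + (z1 - z2) ^ 2 / ε ^ 2 + (s1 - s2) ^ 2 / ε ^ 2
          + α * (Lfun z1 + Lfun z2)) := rfl
      rw [e1, e2] at hΦle
      show v (z2, s2) - ((fun z : ℝ => -((z1 - z) ^ 2 / ε ^ 2) - α * Lfun z) z2 + (fun s : ℝ => -((s1 - s) ^ 2 / ε ^ 2)) s2) ≤ v p - ((fun z : ℝ => -((z1 - z) ^ 2 / ε ^ 2) - α * Lfun z) p.1 + (fun s : ℝ => -((s1 - s) ^ 2 / ε ^ 2)) p.2)
      simp only
      linarith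
    -- apply the viscosity properties
    have hsubap : fderiv ℝ (fun p : ℝ × ℝ => (fun z : ℝ => (z - z2) ^ 2 / ε ^ 2 + α * Lfun z) p.1 + (fun s : ℝ => A * Real.exp (-β * (s - t₀)) + (η * (s - t₀) + (s - s2) ^ 2 / ε ^ 2)) p.2) (z1, s1) (0, 1)
        + H (z1, s1) (u (z1, s1)) (fderiv ℝ (fun p : ℝ × ℝ => (fun z : ℝ => (z - z2) ^ 2 / ε ^ 2 + α * Lfun z) p.1 + (fun s : ℝ => A * Real.exp (-β * (s - t₀)) + (η * (s - t₀) + (s - s2) ^ 2 / ε ^ 2)) p.2) (z1, s1) (1, 0)) ≤ 0 :=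
      hsub.2 (fun p : ℝ × ℝ => (fun z : ℝ => (z - z2) ^ 2 / ε ^ 2 + α * Lfun z) p.1 + (fun s : ℝ => A * Real.exp (-β * (s - t₀)) + (η * (s - t₀) + (s - s2) ^ 2 / ε ^ 2)) p.2) (sep_contDiff hfc hgc) (z1, s1) (Set.mem_prod.mpr ⟨trivial, hs1t⟩) hmax
    have hsupap : 0 ≤ fderiv ℝ (fun p : ℝ × ℝ => (fun z : ℝ => -((z1 - z) ^ 2 / ε ^ 2) - α * Lfun z) p.1 + (fun s : ℝ => -((s1 - s) ^ 2 / ε ^ 2)) p.2) (z2, s2) (0, 1)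
        + H (z2, s2) (v (z2, s2)) (fderiv ℝ (fun p : ℝ × ℝ => (fun z : ℝ => -((z1 - z) ^ 2 / ε ^ 2) - α * Lfun z) p.1 + (fun s : ℝ => -((s1 - s) ^ 2 / ε ^ 2)) p.2) (z2, s2) (1, 0)) :=
      hsup.2 (fun p : ℝ × ℝ => (fun z : ℝ => -((z1 - z) ^ 2 / ε ^ 2) - α * Lfun z) p.1 + (fun s : ℝ => -((s1 - s) ^ 2 / ε ^ 2)) p.2) (sep_contDiff hfhc hghc) (z2, s2) (Set.mem_prod.mpr ⟨trivial, hs2t⟩) hmin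
    obtain ⟨ef1, ef2⟩ := sep_fderiv (y := ((z1, s1) : ℝ × ℝ)) hf' hg'
    obtain ⟨eg1, eg2⟩ := sep_fderiv (y := ((z2, s2) : ℝ × ℝ)) hfh' hgh'
    rw [ef1, ef2] at hsubap
    rw [eg1, eg2] at hsupap
    -- the modulus estimates
    have hm : ‖((z1, s1) : ℝ × ℝ) - ((z2, s2) : ℝ × ℝ)‖ ≤ C * ε := by
      simp only [Prod.mk_sub_mk, Prod.norm_def, Real.norm_eq_abs]
      exact max_le hzz hss
    have est1 := hR2a (z1, s1) (z1, s1) (u (z1, s1)) (2 * (z1 - z2) / ε ^ 2 + α * (2 * z1 / (1 + z1 ^ 2))) (2 * (z1 - z2) / ε ^ 2)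
    simp only [sub_self, norm_zero, zero_add, add_sub_cancel_left] at est1
    have ha1b : |α * (2 * z1 / (1 + z1 ^ 2))| ≤ α := by
      rw [abs_mul, abs_of_pos hα]
      exact mul_le_of_le_one_right hα.le (Lfun_deriv_bound z1)
    have est1' := est1.trans (hωmono ha1b)
    have est2 := hR2a (z2, s2) (z2, s2) (v (z2, s2)) (2 * (z1 - z2) / ε ^ 2 - α * (2 * z2 / (1 + z2 ^ 2))) (2 * (z1 - z2) / ε ^ 2)
    simp only [sub_self, norm_zero, zero_add, sub_sub_cancel_left, abs_neg] at est2
    have ha2b : |α * (2 * z2 / (1 + z2 ^ 2))| ≤ α := by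
      rw [abs_mul, abs_of_pos hα]
      exact mul_le_of_le_one_right hα.le (Lfun_deriv_bound z2)
    have est2' := est2.trans (hωmono ha2b)
    have est3 := hR2a (z1, s1) (z2, s2) (v (z2, s2)) (2 * (z1 - z2) / ε ^ 2) (2 * (z1 - z2) / ε ^ 2)
    simp only [sub_self, abs_zero, add_zero] at est3
    have est3' := est3.trans (hωmono hm)
    have hvu : v (z2, s2) ≤ u (z1, s1) := by linarith
    have est4 := hmono (z1, s1) (2 * (z1 - z2) / ε ^ 2) (u (z1, s1)) (v (z2, s2)) hvu
    have est5 : β * (A * Real.exp (-β * (s1 - t₀))) ≤ β * (u (z1, s1) - v (z2, s2)) :=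
      mul_le_mul_of_nonneg_left (by linarith) hβ
    have hωa : ω α < η / 4 := hωsmall α hα.le hαα₀
    have hωce : ω (C * ε) < η / 4 := hωsmall _ (by positivity) hCεα₀
    have e1' := abs_le.mp est1'
    have e2' := abs_le.mp est2'
    have e3' := abs_le.mp est3'
    linarith [e1'.1, e1'.2, e2'.1, e2'.2, e3'.1, e3'.2, est4, est5, hωa, hωce,
      hsubap, hsupap, hη]


  -- conclude from the key claim
  intro t ht z
  rcases le_or_gt (u (z, t) - v (z, t)) 0 with h | h
  · rw [max_eq_right h, mul_zero]; exact hA0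
  · rw [max_eq_left h.le]
    have hk := key t ht z
    have hpos := Real.exp_pos (β * (t - t₀))
    calc Real.exp (β * (t - t₀)) * (u (z, t) - v (z, t))
        ≤ Real.exp (β * (t - t₀)) * (A * Real.exp (-β * (t - t₀))) :=
          mul_le_mul_of_nonneg_left hk hpos.le
      _ = A := by
          rw [mul_comm A, ← mul_assoc, ← Real.exp_add,
            show β * (t - t₀) + -β * (t - t₀) = 0 from by ring, Real.exp_zero, one_mul]
end

section
/- Let T_p > 0 and β > 0. Suppose H : ℝ² × ℝ × ℝ → ℝ satisfies conditions (R1)–(R2), is T_p-periodic in its time argument (i.e., H((z, t + T_p), u, p) = H((z, t), u, p) for all z, t, u, p), and satisfies the monotonicity condition H((z,t), r, p) − H((z,t), s, p) ≥ β·(r − s) for all (z,t), p and all r ≥ s. Let u, v : ℝ² → ℝ be bounded, uniformly continuous, T_p-periodic in the time variable (u(z, t + T_p) = u(z, t) and v(z, t + T_p) = v(z, t) for all (z,t)), with u a viscosity subsolution and v a viscosity supersolution on ℝ × ℝ of ∂_t f + H((z,t), f, ∂_z f) = 0. Then u(z, t) ≤ v(z, t) for all (z, t) ∈ ℝ ×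 ℝ. -/
open Set Filter

lemma aux_sq_le {x y : ℝ} (hx : 0 ≤ x) (hy : 0 ≤ y) (h : x^2 ≤ y^2) : x ≤ y := by
  nlinarith

lemma aux_fderiv (c K α b1 b2 a1 a2 : ℝ) :
    ContDiff ℝ 2 (fun p : ℝ × ℝ =>
        c * (K * (p.1 - b1)^2 + α * p.1^2) + c * (K * (p.2 - b2)^2 + α * p.2^2)) ∧
    fderiv ℝ (fun p : ℝ × ℝ =>
        c * (K * (p.1 - b1)^2 + α * p.1^2) + c * (K * (p.2 - b2)^2 + α * p.2^2)) (a1, a2) (1, 0)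
      = c * (2*K*(a1-b1) + 2*α*a1) ∧
    fderiv ℝ (fun p : ℝ × ℝ =>
        c * (K * (p.1 - b1)^2 + α * p.1^2) + c * (K * (p.2 - b2)^2 + α * p.2^2)) (a1, a2) (0, 1)
      = c * (2*K*(a2-b2) + 2*α*a2) := by
  have hg : HasDerivAt (fun z : ℝ => c * (K * (z - b1)^2 + α * z^2))
      (c * (2*K*(a1-b1) + 2*α*a1)) a1 := by
    have h1 : HasDerivAt (fun z : ℝ => (z - b1)^2) (2*(a1-b1)) a1 := by
      simpa using ((hasDerivAt_id a1).sub_const b1).fun_pow 2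
    have h2 : HasDerivAt (fun z : ℝ => z^2) (2*a1) a1 := by
      simpa using (hasDerivAt_id a1).fun_pow 2
    have := ((h1.const_mul K).add (h2.const_mul α)).const_mul c
    exact this.congr_deriv (by ring)
  have hh : HasDerivAt (fun z : ℝ => c * (K * (z - b2)^2 + α * z^2))
      (c * (2*K*(a2-b2) + 2*α*a2)) a2 := by
    have h1 : HasDerivAt (fun z : ℝ => (z - b2)^2) (2*(a2-b2)) a2 := by
      simpa using ((hasDerivAt_id a2).sub_const b2).fun_pow 2
    have h2 : HasDerivAt (fun z : ℝ => z^2) (2*a2) a2 := by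
      simpa using (hasDerivAt_id a2).fun_pow 2
    have := ((h1.const_mul K).add (h2.const_mul α)).const_mul c
    exact this.congr_deriv (by ring)
  have HF : HasFDerivAt (fun p : ℝ × ℝ =>
        c * (K * (p.1 - b1)^2 + α * p.1^2) + c * (K * (p.2 - b2)^2 + α * p.2^2))
      ((c * (2*K*(a1-b1) + 2*α*a1)) • ContinuousLinearMap.fst ℝ ℝ ℝ
        + (c * (2*K*(a2-b2) + 2*α*a2)) • ContinuousLinearMap.snd ℝ ℝ ℝ) ((a1, a2) : ℝ × ℝ) := by
    exact (hg.comp_hasFDerivAt (h₂ := fun z : ℝ => c * (K * (z - b1)^2 + α * z^2)) _ hasFDerivAt_fst).add (hh.comp_hasFDerivAt (h₂ := fun z : ℝ => c * (K * (z - b2)^2 + α * z^2)) _ hasFDerivAt_snd)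
  refine ⟨by fun_prop, ?_, ?_⟩ <;> rw [HF.fderiv] <;> simp

lemma aux_sum_sq (a b c d : ℝ) : (a+b+c+d)^2 ≤ 4*(a^2+b^2+c^2+d^2) := by
  nlinarith [sq_nonneg (a-b), sq_nonneg (a-c), sq_nonneg (a-d), sq_nonneg (b-c),
    sq_nonneg (b-d), sq_nonneg (c-d)]

lemma aux_max (f : (ℝ × ℝ) × (ℝ × ℝ) → ℝ) (hf : Continuous f) (A c : ℝ) (hA : 0 < A)
    (hbd : ∀ w, f w ≤ c - A * (w.1.1^2 + w.1.2^2 + w.2.1^2 + w.2.2^2)) :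
    ∃ w, ∀ y, f y ≤ f w := by
  have key : ∀ w : (ℝ × ℝ) × (ℝ × ℝ), ‖w‖^2 ≤ 4*(w.1.1^2 + w.1.2^2 + w.2.1^2 + w.2.2^2) := by
    intro w
    have h1 : ‖w‖ ≤ |w.1.1| + |w.1.2| + |w.2.1| + |w.2.2| := by
      rw [Prod.norm_def, Prod.norm_def, Prod.norm_def, Real.norm_eq_abs, Real.norm_eq_abs,
        Real.norm_eq_abs, Real.norm_eq_abs]
      apply max_le <;> apply max_le <;>
        linarith [abs_nonneg w.1.1, abs_nonneg w.1.2, abs_nonneg w.2.1, abs_nonneg w.2.2]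
    have h2 : ‖w‖^2 ≤ (|w.1.1| + |w.1.2| + |w.2.1| + |w.2.2|)^2 :=
      pow_le_pow_left₀ (norm_nonneg _) h1 2
    have h3 := aux_sum_sq |w.1.1| |w.1.2| |w.2.1| |w.2.2|
    simp only [sq_abs] at h3
    linarith
  have t2 : Tendsto (fun r : ℝ => (A/4) * r^2 - c) atTop atTop := by
    apply tendsto_atTop_add_const_right
    exact (tendsto_pow_atTop (two_ne_zero)).const_mul_atTop (by positivity)
  have t1 : Tendsto (fun w : (ℝ × ℝ) × (ℝ × ℝ) => (A/4) * ‖w‖^2 - c)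
      (cocompact _) atTop := t2.comp tendsto_norm_cocompact_atTop
  have t3 : Tendsto (fun w => - f w) (cocompact ((ℝ × ℝ) × (ℝ × ℝ))) atTop := by
    apply tendsto_atTop_mono _ t1
    intro w
    have h1 := key w
    have h2 := hbd w
    have h3 : 0 ≤ ‖w‖^2 := sq_nonneg _
    nlinarith
  obtain ⟨w, hw⟩ := (hf.neg).exists_forall_le t3
  exact ⟨w, fun y => by have := hw y; simp only [Pi.neg_apply] at this; linarith⟩

set_option maxHeartbeats 1000000 in
/-- Theorem A.6 (Comparison theorem, periodic form): for a `T_p`-periodic Hamiltonian `H`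
satisfying (R1)–(R2) and `β`-monotonicity with `β > 0`, any bounded uniformly continuous
`T_p`-periodic viscosity subsolution `u` and supersolution `v` of
`∂_t f + H((z,t), f, ∂_z f) = 0` on `ℝ × ℝ` satisfy `u ≤ v` everywhere. -/
theorem stmt_7 (Tp β : ℝ) (hTp : 0 < Tp) (hβ : 0 < β)
    (H : (ℝ × ℝ) → ℝ → ℝ → ℝ) (hH : SatisfiesR1R2 H)
    (hper : ∀ (z t uu p : ℝ), H (z, t + Tp) uu p = H (z, t) uu p)
    (hmono : ∀ (y : ℝ × ℝ) (p r s : ℝ), s ≤ r → β * (r - s) ≤ H y r p - H y s p)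
    (u v : ℝ × ℝ → ℝ)
    (hub : ∃ M, ∀ p, |u p| ≤ M) (hvb : ∃ M, ∀ p, |v p| ≤ M)
    (huc : UniformContinuous u) (hvc : UniformContinuous v)
    (huper : ∀ z t, u (z, t + Tp) = u (z, t)) (hvper : ∀ z t, v (z, t + Tp) = v (z, t))
    (hsub : IsViscositySubsolnOn (fun y q p => p.2 + H y q p.1) u univ)
    (hsup : IsViscositySupersolnOn (fun y q p => p.2 + H y q p.1) v univ) :
    ∀ z t : ℝ, u (z, t) ≤ v (z, t) := by
  obtain ⟨Mu, hMu⟩ := hub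
  obtain ⟨Mv, hMv⟩ := hvb
  obtain ⟨hHuc, ω, ⟨hωmono, hω0, hωnn, hωlim⟩, hω1, hω2⟩ := hH
  intro z0 t0
  by_contra hlt
  push_neg at hlt
  obtain ⟨C, hC, hCu, hCv⟩ : ∃ C : ℝ, 0 < C ∧ (∀ p, |u p| ≤ C) ∧ (∀ p, |v p| ≤ C) := by
    refine ⟨max Mu Mv + 1, ?_, fun p => ?_, fun p => ?_⟩
    · have h0 : (0:ℝ) ≤ Mu := (abs_nonneg _).trans (hMu (0, 0))
      linarith [le_max_left Mu Mv]
    · linarith [hMu p, le_max_left Mu Mv]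
    · linarith [hMv p, le_max_right Mu Mv]
  obtain ⟨σ, hσ, hσdef⟩ : ∃ σ : ℝ, 0 < σ ∧ σ = u (z0, t0) - v (z0, t0) :=
    ⟨u (z0, t0) - v (z0, t0), by linarith, rfl⟩
  -- choose s0 > 0 with omega s0 < beta*sigma/8
  have hev : ∀ᶠ s in nhdsWithin (0:ℝ) (Ioi 0), ω s < β * σ / 8 ∧ s ∈ Ioi (0:ℝ) := by
    refine Filter.Eventually.and ?_ eventually_mem_nhdsWithin
    exact hωlim (Iio_mem_nhds (by positivity))
  obtain ⟨s0, hs0ω, hs0pos⟩ := hev.exists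
  simp only [mem_Ioi] at hs0pos
  obtain ⟨N0, hN0, hN0def⟩ : ∃ N0 : ℝ, 0 ≤ N0 ∧ N0 = z0^2 + t0^2 :=
    ⟨z0^2 + t0^2, by positivity, rfl⟩
  obtain ⟨α, hα, hα1, hα2, hα3⟩ : ∃ α : ℝ, 0 < α ∧ α * (2*C) ≤ (β*σ/32)^2 ∧
      α * (2*C) ≤ (s0/8)^2 ∧ α * (8*(N0+1)) ≤ σ := by
    refine ⟨min (min ((β*σ/32)^2 / (2*C)) ((s0/8)^2 / (2*C))) (σ / (8*(N0+1))),
      lt_min (lt_min (by positivity) (by positivity)) (by positivity), ?_, ?_, ?_⟩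
    · have h1 : min (min ((β*σ/32)^2 / (2*C)) ((s0/8)^2 / (2*C))) (σ / (8*(N0+1)))
          ≤ (β*σ/32)^2 / (2*C) := le_trans (min_le_left _ _) (min_le_left _ _)
      have h2 : ((β*σ/32)^2 / (2*C)) * (2*C) = (β*σ/32)^2 :=
        div_mul_cancel₀ _ (by positivity)
      have h3 := mul_le_mul_of_nonneg_right h1 (by positivity : (0:ℝ) ≤ 2*C)
      rw [h2] at h3
      linarith
    · have h1 : min (min ((β*σ/32)^2 / (2*C)) ((s0/8)^2 / (2*C))) (σ / (8*(N0+1)))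
          ≤ (s0/8)^2 / (2*C) := le_trans (min_le_left _ _) (min_le_right _ _)
      have h2 : ((s0/8)^2 / (2*C)) * (2*C) = (s0/8)^2 :=
        div_mul_cancel₀ _ (by positivity)
      have h3 := mul_le_mul_of_nonneg_right h1 (by positivity : (0:ℝ) ≤ 2*C)
      rw [h2] at h3
      linarith
    · have h1 : min (min ((β*σ/32)^2 / (2*C)) ((s0/8)^2 / (2*C))) (σ / (8*(N0+1)))
          ≤ σ / (8*(N0+1)) := min_le_right _ _
      have h2 : (σ / (8*(N0+1))) * (8*(N0+1)) = σ :=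
        div_mul_cancel₀ _ (by positivity)
      have h3 := mul_le_mul_of_nonneg_right h1 (by positivity : (0:ℝ) ≤ 8*(N0+1))
      rw [h2] at h3
      linarith
  obtain ⟨K, hK, hKval⟩ : ∃ K : ℝ, 0 < K ∧ K * (s0/2)^2 = 2*C := by
    refine ⟨8*C / s0^2, by positivity, ?_⟩
    field_simp
    ring
  -- the doubled-variables functional has a global max
  obtain ⟨a1, a2, b1, b2, hmax⟩ : ∃ a1 a2 b1 b2 : ℝ, ∀ x1 x2 y1 y2 : ℝ,
      u (x1, x2) - v (y1, y2) - K * ((x1 - y1)^2 + (x2 - y2)^2)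
        - α * (x1^2 + x2^2) - α * (y1^2 + y2^2)
      ≤ u (a1, a2) - v (b1, b2) - K * ((a1 - b1)^2 + (a2 - b2)^2)
        - α * (a1^2 + a2^2) - α * (b1^2 + b2^2) := by
    have hcont : Continuous (fun w : (ℝ × ℝ) × (ℝ × ℝ) =>
        u w.1 - v w.2 - K * ((w.1.1 - w.2.1)^2 + (w.1.2 - w.2.2)^2)
          - α * (w.1.1^2 + w.1.2^2) - α * (w.2.1^2 + w.2.2^2)) := by
      have hu' : Continuous u := huc.continuous
      have hv' : Continuous v := hvc.continuous
      fun_prop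
    have hbd : ∀ w : (ℝ × ℝ) × (ℝ × ℝ),
        (fun w : (ℝ × ℝ) × (ℝ × ℝ) =>
          u w.1 - v w.2 - K * ((w.1.1 - w.2.1)^2 + (w.1.2 - w.2.2)^2)
            - α * (w.1.1^2 + w.1.2^2) - α * (w.2.1^2 + w.2.2^2)) w
          ≤ 2*C - α * (w.1.1^2 + w.1.2^2 + w.2.1^2 + w.2.2^2) := by
      intro w
      have h1 := abs_le.mp (hCu w.1)
      have h2 := abs_le.mp (hCv w.2)
      have h3 : 0 ≤ K * ((w.1.1 - w.2.1)^2 + (w.1.2 - w.2.2)^2) := by positivity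
      simp only
      linarith
    obtain ⟨w, hw⟩ := aux_max _ hcont α (2*C) hα hbd
    exact ⟨w.1.1, w.1.2, w.2.1, w.2.2, fun x1 x2 y1 y2 => hw ((x1, x2), (y1, y2))⟩
  -- basic estimates at the max point
  have hdiag := hmax z0 t0 z0 t0
  have hdiag' : u (z0, t0) - v (z0, t0) - α * (z0^2 + t0^2) - α * (z0^2 + t0^2)
      ≤ u (a1, a2) - v (b1, b2) - K * ((a1 - b1)^2 + (a2 - b2)^2)
        - α * (a1^2 + a2^2) - α * (b1^2 + b2^2) := by
    have hz : K * ((z0 - z0)^2 + (t0 - t0)^2) = 0 := by ring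
    linarith [hdiag]
  have hlow : σ/2 ≤ u (a1, a2) - v (b1, b2)
      - K * ((a1 - b1)^2 + (a2 - b2)^2) - α * (a1^2 + a2^2) - α * (b1^2 + b2^2) := by
    have hαN0 : α * (z0^2 + t0^2) ≤ σ/8 := by
      rw [hN0def] at hα3
      linarith [hα3, hα]
    rw [hσdef]
    linarith [hdiag', hαN0]
  have hUV2C : u (a1, a2) - v (b1, b2) ≤ 2*C := by
    have h1 := abs_le.mp (hCu (a1, a2))
    have h2 := abs_le.mp (hCv (b1, b2))
    linarith
  have hpen : K * ((a1 - b1)^2 + (a2 - b2)^2) + α * (a1^2 + a2^2) + α * (b1^2 + b2^2) ≤ 2*C := by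
    linarith [hσ]
  have hσ2 : σ/2 ≤ u (a1, a2) - v (b1, b2) := by
    have h1 : 0 ≤ K * ((a1 - b1)^2 + (a2 - b2)^2) := by positivity
    have h2 : 0 ≤ α * (a1^2 + a2^2) := by positivity
    have h3 : 0 ≤ α * (b1^2 + b2^2) := by positivity
    linarith
  -- coordinate bounds
  have hpos1 : 0 ≤ K * (a1 - b1)^2 := by positivity
  have hpos2 : 0 ≤ K * (a2 - b2)^2 := by positivity
  have hpos3 : 0 ≤ α * a1^2 := by positivity
  have hpos4 : 0 ≤ α * a2^2 := by positivity
  have hpos5 : 0 ≤ α * b1^2 := by positivity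
  have hpos6 : 0 ≤ α * b2^2 := by positivity
  have hKd1 : K * (a1 - b1)^2 ≤ 2*C := by linarith [hpen]
  have hKd2 : K * (a2 - b2)^2 ≤ 2*C := by linarith [hpen]
  have hd1 : |a1 - b1| ≤ s0/2 := by
    apply aux_sq_le (abs_nonneg _) (by positivity)
    rw [sq_abs]
    have := (mul_le_mul_iff_right₀ hK).mp (by linarith [hKd1, hKval] : K * (a1 - b1)^2 ≤ K * (s0/2)^2)
    linarith
  have hd2 : |a2 - b2| ≤ s0/2 := by
    apply aux_sq_le (abs_nonneg _) (by positivity)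
    rw [sq_abs]
    have := (mul_le_mul_iff_right₀ hK).mp (by linarith [hKd2, hKval] : K * (a2 - b2)^2 ≤ K * (s0/2)^2)
    linarith
  have hsqa1 : α * a1^2 ≤ 2*C := by linarith [hpen]
  have hsqa2 : α * a2^2 ≤ 2*C := by linarith [hpen]
  have hsqb1 : α * b1^2 ≤ 2*C := by linarith [hpen]
  have hsqb2 : α * b2^2 ≤ 2*C := by linarith [hpen]
  have habs_bound : ∀ x bnd : ℝ, α * x^2 ≤ 2*C → α * (2*C) ≤ bnd^2 → 0 ≤ bnd → α * |x| ≤ bnd := by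
    intro x bnd h1 h2 h3
    apply aux_sq_le (by positivity) h3
    have he : (α * |x|)^2 = α * (α * x^2) := by rw [mul_pow, sq_abs]; ring
    rw [he]
    have h5 := mul_le_mul_of_nonneg_left h1 hα.le
    linarith
  have hA1 : α * |a1| ≤ s0/8 := habs_bound a1 (s0/8) hsqa1 hα2 (by positivity)
  have hB1 : α * |b1| ≤ s0/8 := habs_bound b1 (s0/8) hsqb1 hα2 (by positivity)
  have hA2 : α * |a2| ≤ β*σ/32 := habs_bound a2 (β*σ/32) hsqa2 hα1 (by positivity)
  have hB2 : α * |b2| ≤ β*σ/32 := habs_bound b2 (β*σ/32) hsqb2 hα1 (by positivity)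
  -- subsolution test function
  obtain ⟨hφcd, hφ1, hφ2⟩ := aux_fderiv 1 K α b1 b2 a1 a2
  have hmaxloc : IsLocalMax (fun p => u p - (fun p : ℝ × ℝ =>
      (1:ℝ) * (K * (p.1 - b1)^2 + α * p.1^2) + (1:ℝ) * (K * (p.2 - b2)^2 + α * p.2^2)) p)
      ((a1, a2) : ℝ × ℝ) := by
    apply Filter.Eventually.of_forall
    rintro ⟨x1, x2⟩
    show u (x1, x2) - ((1:ℝ) * (K * (x1 - b1)^2 + α * x1^2)
        + (1:ℝ) * (K * (x2 - b2)^2 + α * x2^2))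
      ≤ u (a1, a2) - ((1:ℝ) * (K * (a1 - b1)^2 + α * a1^2)
        + (1:ℝ) * (K * (a2 - b2)^2 + α * a2^2))
    linarith [hmax x1 x2 b1 b2]
  have hsub2 := hsub.2 _ hφcd (a1, a2) (mem_univ _) hmaxloc
  simp only at hsub2
  rw [hφ1, hφ2] at hsub2
  simp only [one_mul] at hsub2
  -- supersolution test function
  obtain ⟨hψcd, hψ1, hψ2⟩ := aux_fderiv (-1) K α a1 a2 b1 b2
  have hminloc : IsLocalMin (fun p => v p - (fun p : ℝ × ℝ =>
      (-1:ℝ) * (K * (p.1 - a1)^2 + α * p.1^2) + (-1:ℝ) * (K * (p.2 - a2)^2 + α * p.2^2)) p)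
      ((b1, b2) : ℝ × ℝ) := by
    apply Filter.Eventually.of_forall
    rintro ⟨q1, q2⟩
    show v (b1, b2) - ((-1:ℝ) * (K * (b1 - a1)^2 + α * b1^2)
        + (-1:ℝ) * (K * (b2 - a2)^2 + α * b2^2))
      ≤ v (q1, q2) - ((-1:ℝ) * (K * (q1 - a1)^2 + α * q1^2)
        + (-1:ℝ) * (K * (q2 - a2)^2 + α * q2^2))
    linarith [hmax a1 a2 q1 q2]
  have hsup2 := hsup.2 _ hψcd (b1, b2) (mem_univ _) hminloc
  simp only at hsup2
  rw [hψ1, hψ2] at hsup2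
  simp only [neg_one_mul] at hsup2
  -- combine
  have hVU : v (b1, b2) ≤ u (a1, a2) := by linarith
  have hmono2 := hmono (a1, a2) (2*K*(a1-b1) + 2*α*a1) (u (a1, a2)) (v (b1, b2)) hVU
  have habsH := hω1 (b1, b2) (a1, a2) (v (b1, b2))
    (-(2*K*(b1-a1) + 2*α*b1)) (2*K*(a1-b1) + 2*α*a1)
  have hnorm : ‖((b1, b2) : ℝ × ℝ) - (a1, a2)‖ ≤ s0/2 := by
    have heq : ((b1, b2) : ℝ × ℝ) - (a1, a2) = ((b1 - a1, b2 - a2) : ℝ × ℝ) := rfl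
    rw [heq, Prod.norm_def, Real.norm_eq_abs, Real.norm_eq_abs]
    rw [abs_sub_comm b1 a1, abs_sub_comm b2 a2]
    exact max_le hd1 hd2
  have hQP : |-(2*K*(b1-a1) + 2*α*b1) - (2*K*(a1-b1) + 2*α*a1)| ≤ s0/2 := by
    have heq : -(2*K*(b1-a1) + 2*α*b1) - (2*K*(a1-b1) + 2*α*a1)
        = -(2*α*b1) + -(2*α*a1) := by ring
    rw [heq]
    have h5 : |-(2*α*b1) + -(2*α*a1)| ≤ |-(2*α*b1)| + |-(2*α*a1)| := abs_add_le _ _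
    have h6 : |-(2*α*b1)| = 2*(α*|b1|) := by
      rw [abs_neg, abs_mul, abs_mul]
      rw [abs_of_pos hα, abs_of_nonneg (by norm_num : (0:ℝ) ≤ 2)]
      ring
    have h7 : |-(2*α*a1)| = 2*(α*|a1|) := by
      rw [abs_neg, abs_mul, abs_mul]
      rw [abs_of_pos hα, abs_of_nonneg (by norm_num : (0:ℝ) ≤ 2)]
      ring
    rw [h6, h7] at h5
    linarith
  have hωs0 : ω (‖((b1, b2) : ℝ × ℝ) - (a1, a2)‖
      + |-(2*K*(b1-a1) + 2*α*b1) - (2*K*(a1-b1) + 2*α*a1)|) ≤ ω s0 := by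
    apply hωmono
    linarith
  have hHdiff : H (b1, b2) (v (b1, b2)) (-(2*K*(b1-a1) + 2*α*b1))
      - H (a1, a2) (v (b1, b2)) (2*K*(a1-b1) + 2*α*a1) ≤ ω s0 :=
    le_trans (le_abs_self _) (le_trans habsH hωs0)
  -- final contradiction
  have hfin : β * (u (a1, a2) - v (b1, b2)) ≤ (-(2*α*a2) - 2*α*b2) + ω s0 := by
    linarith [hsub2, hsup2, hmono2, hHdiff]
  have hson : ω s0 < β*σ/8 := hs0ω
  have hneg2 : -(2*α*a2) - 2*α*b2 ≤ 2*(α*|a2|) + 2*(α*|b2|) := by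
    have h1 := mul_le_mul_of_nonneg_left (neg_abs_le a2) hα.le
    have h2 := mul_le_mul_of_nonneg_left (neg_abs_le b2) hα.le
    linarith
  have hβσ : β * (σ/2) ≤ β * (u (a1, a2) - v (b1, b2)) :=
    mul_le_mul_of_nonneg_left hσ2 hβ.le
  linarith [hβσ, hfin, hneg2, hA2, hB2, mul_pos hβ hσ, hson]
end

section
/- Let β ≥ 0, T > 0, ε ≥ 0, λ̄ ≥ 0, L₁ ≥ 0. Let λ : ℝ → ℝ with |λ(τ)| ≤ λ̄ for all τ, and let r̄, r̂, Ḡ, Ĝ : ℝ² → ℝ satisfy sup_{(z,τ)} |r̂(z,τ) − r̄(z,τ)| ≤ ε and sup_{(z,τ)} |Ĝ(z,τ) − Ḡ(z,τ)| ≤ ε. Define H(z,τ,p) := −e^{βτ}·λ(τ)·r̄(z,τ) − λ(τ)·Ḡ(z,τ)·p and Ĥ(z,τ,p) := −e^{βτ}·λ(τ)·r̂(z,τ) − λ(τ)·Ĝ(z,τ)·p. Let Υ ⊆ ℝ × (0, T) be open and let u : ℝ² → ℝ be continuous, Lipschitz in its first argument with constant L₁ (|u(z₁,τ) − u(z₂,τ)|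 ≤ L₁·|z₁ − z₂| for all z₁, z₂, τ), and a viscosity solution on Υ of ∂_τ f + H(z, τ, ∂_z f) = 0. Then for every constant C ≥ λ̄·(e^{βT} + L₁), the function w(z,τ) := u(z,τ) + C·ε·τ is a viscosity supersolution on Υ of ∂_τ f + Ĥ(z, τ, ∂_z f) = 0. -/
open Set Filter

/-- `u` is a viscosity solution of `F (y, u y, Du y) = 0` on the open set `U ⊆ ℝ²`. -/
def IsViscositySolnOn (F : (ℝ × ℝ) → ℝ → (ℝ × ℝ) → ℝ) (u : ℝ × ℝ → ℝ)
    (U : Set (ℝ × ℝ)) : Prop :=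
  IsViscositySubsolnOn F u U ∧ IsViscositySupersolnOn F u U

lemma deriv_abs_le {g : ℝ → ℝ} {a L : ℝ} (hg : HasDerivAt g a 0)
    (h : ∀ᶠ t in nhds (0:ℝ), g t - g 0 ≤ L * |t|) : |a| ≤ L := by
  have hs := hasDerivAt_iff_tendsto_slope.1 hg
  have h1 : a ≤ L := by
    have hsub : nhdsWithin (0:ℝ) (Ioi 0) ≤ nhdsWithin 0 {(0:ℝ)}ᶜ :=
      nhdsWithin_mono _ (by intro t ht; simp only [mem_compl_iff, mem_singleton_iff]; exact ne_of_gt (mem_Ioi.1 ht))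
    refine le_of_tendsto (hs.mono_left hsub) ?_
    filter_upwards [self_mem_nhdsWithin, mem_nhdsWithin_of_mem_nhds h] with t ht hle
    have ht' : 0 < t := ht
    rw [slope_def_field]
    simp only [sub_zero]
    rw [div_le_iff₀ ht']
    calc g t - g 0 ≤ L * |t| := hle
      _ = L * t := by rw [abs_of_pos ht']
  have h2 : -L ≤ a := by
    have hsub : nhdsWithin (0:ℝ) (Iio 0) ≤ nhdsWithin 0 {(0:ℝ)}ᶜ :=
      nhdsWithin_mono _ (by intro t ht; simp only [mem_compl_iff, mem_singleton_iff]; exact ne_of_lt (mem_Iio.1 ht))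
    refine ge_of_tendsto (hs.mono_left hsub) ?_
    filter_upwards [self_mem_nhdsWithin, mem_nhdsWithin_of_mem_nhds h] with t ht hle
    have ht' : t < 0 := ht
    rw [slope_def_field]
    simp only [sub_zero]
    rw [le_div_iff_of_neg ht']
    calc g t - g 0 ≤ L * |t| := hle
      _ = -L * t := by rw [abs_of_neg ht']; ring
  exact abs_le.2 ⟨h2, h1⟩


/-- The key perturbation step in the proof of Theorem 1 (Dirichlet case): if `u` is a
viscosity solution of `∂_τ f + H(z,τ,∂_z f) = 0` on `Υ ⊆ ℝ × (0,T)`, where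
`H(z,τ,p) = −e^{βτ} λ(τ) r̄(z,τ) − λ(τ) Ḡ(z,τ) p`, `u` is `L₁`-Lipschitz in `z`, and the
perturbed coefficients satisfy `‖r̂ − r̄‖_∞ ≤ ε`, `‖Ĝ − Ḡ‖_∞ ≤ ε`, then for every
`C ≥ λ̄ (e^{βT} + L₁)`, the function `(z,τ) ↦ u(z,τ) + C ε τ` is a viscosity supersolution
of `∂_τ f + Ĥ(z,τ,∂_z f) = 0` on `Υ`. -/
theorem stmt_8 (β T ε lamBar L₁ : ℝ) (hβ : 0 ≤ β) (hT : 0 < T) (hε : 0 ≤ ε)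
    (hlamBar : 0 ≤ lamBar) (hL₁ : 0 ≤ L₁)
    (lam : ℝ → ℝ) (hlam : ∀ τ, |lam τ| ≤ lamBar)
    (rbar rhat Gbar Ghat : ℝ × ℝ → ℝ)
    (hr : ∀ p, |rhat p - rbar p| ≤ ε) (hG : ∀ p, |Ghat p - Gbar p| ≤ ε)
    (Y : Set (ℝ × ℝ)) (hYopen : IsOpen Y) (hYsub : ∀ p ∈ Y, p.2 ∈ Ioo (0 : ℝ) T)
    (u : ℝ × ℝ → ℝ) (hu : Continuous u)
    (huLip : ∀ z₁ z₂ τ : ℝ, |u (z₁, τ) - u (z₂, τ)| ≤ L₁ * |z₁ - z₂|)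
    (husol : IsViscositySolnOn
      (fun y _ p => p.2 +
        (-(Real.exp (β * y.2)) * lam y.2 * rbar y - lam y.2 * Gbar y * p.1))
      u Y) :
    ∀ C : ℝ, lamBar * (Real.exp (β * T) + L₁) ≤ C →
      IsViscositySupersolnOn
        (fun y _ p => p.2 +
          (-(Real.exp (β * y.2)) * lam y.2 * rhat y - lam y.2 * Ghat y * p.1))
        (fun y => u y + C * ε * y.2) Y := by
  intro C hC
  constructor
  · exact (hu.add (continuous_const.mul continuous_snd)).continuousOn
  intro φ hφ y hy hmin
  -- ψ := φ - C ε τ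
  set ψ : (ℝ × ℝ) → ℝ := fun p => φ p - C * ε * p.2 with hψdef
  have hg2 : ContDiff ℝ 2 (fun p : ℝ × ℝ => C * ε * p.2) := contDiff_const.mul contDiff_snd
  have hψ : ContDiff ℝ 2 ψ := hφ.sub hg2
  have hφd : DifferentiableAt ℝ φ y := (hφ.differentiable (by norm_num)).differentiableAt
  have hg2fd : HasFDerivAt (fun p : ℝ × ℝ => C * ε * p.2)
      ((C * ε) • (ContinuousLinearMap.snd ℝ ℝ ℝ)) y := by
    exact ((ContinuousLinearMap.snd ℝ ℝ ℝ).hasFDerivAt (x := y)).const_smul (C * ε)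
  have hψfd : HasFDerivAt ψ (fderiv ℝ φ y - (C * ε) • (ContinuousLinearMap.snd ℝ ℝ ℝ)) y :=
    hφd.hasFDerivAt.sub hg2fd
  have hψ1 : fderiv ℝ ψ y (1, 0) = fderiv ℝ φ y (1, 0) := by
    rw [hψfd.fderiv]; simp
  have hψ2 : fderiv ℝ ψ y (0, 1) = fderiv ℝ φ y (0, 1) - C * ε := by
    rw [hψfd.fderiv]; simp
  -- the local min transfers
  have hmin' : IsLocalMin (fun p => u p - ψ p) y := by
    have : (fun p => u p - ψ p) = fun p => u p + C * ε * p.2 - φ p := by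
      funext p; simp [hψdef]; ring
    rw [this]; exact hmin
  have hsuper := husol.2.2 ψ hψ y hy hmin'
  simp only [hψ1, hψ2] at hsuper
  -- gradient bound |φ_z y| ≤ L₁
  set a : ℝ := fderiv ℝ φ y (1, 0) with ha
  have habound : |a| ≤ L₁ := by
    have hc : HasDerivAt (fun t : ℝ => (y.1 + t, y.2)) ((1 : ℝ), (0 : ℝ)) 0 := by
      exact ((hasDerivAt_id (0:ℝ)).const_add y.1).prodMk (hasDerivAt_const 0 y.2)
    have hgd : HasDerivAt (fun t : ℝ => φ (y.1 + t, y.2)) a 0 := by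
      have hφd' : HasFDerivAt φ (fderiv ℝ φ y) (y.1 + 0, y.2) := by
        simpa using hφd.hasFDerivAt
      have := hφd'.comp_hasDerivAt (x := (0:ℝ)) hc
      simpa [ha, Function.comp_def] using this
    refine deriv_abs_le hgd ?_
    have htend : Filter.Tendsto (fun t : ℝ => (y.1 + t, y.2)) (nhds 0) (nhds y) := by
      have := hc.continuousAt.tendsto
      simpa using this
    filter_upwards [htend.eventually hmin] with t ht
    have hlip := huLip (y.1 + t) y.1 y.2
    simp only [add_sub_cancel_left] at hlip
    have hy' : u (y.1, y.2) = u y := by rw [Prod.mk.eta]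
    have : u y + C * ε * y.2 - φ y ≤ u (y.1 + t, y.2) + C * ε * y.2 - φ (y.1 + t, y.2) := ht
    have h2 : φ (y.1 + t, y.2) - φ (y.1 + 0, y.2) ≤ u (y.1 + t, y.2) - u (y.1, y.2) := by
      simp only [add_zero]
      rw [Prod.mk.eta]
      linarith
    calc φ (y.1 + t, y.2) - φ (y.1 + 0, y.2) ≤ u (y.1 + t, y.2) - u (y.1, y.2) := h2
      _ ≤ L₁ * |y.1 + t - y.1| := le_trans (le_abs_self _) (huLip _ _ _)
      _ = L₁ * |t| := by ring_nf
  -- final inequality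
  have hτ := hYsub y hy
  have hexp : Real.exp (β * y.2) ≤ Real.exp (β * T) :=
    Real.exp_le_exp.2 (mul_le_mul_of_nonneg_left hτ.2.le hβ)
  have hexppos : (0:ℝ) < Real.exp (β * y.2) := Real.exp_pos _
  -- bound |e^{βτ} λ (r̂ - r̄)| ≤ e^{βT} λ̄ ε
  have hb1 : |Real.exp (β * y.2) * lam y.2 * (rhat y - rbar y)| ≤ Real.exp (β * T) * lamBar * ε := by
    rw [abs_mul, abs_mul, abs_of_pos hexppos]
    have h0 : |lam y.2| ≤ lamBar := hlam _
    have h1 : |rhat y - rbar y| ≤ ε := hr _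
    gcongr
  have hb2 : |lam y.2 * (Ghat y - Gbar y) * a| ≤ lamBar * ε * L₁ := by
    rw [abs_mul, abs_mul]
    have h0 : |lam y.2| ≤ lamBar := hlam _
    have h1 : |Ghat y - Gbar y| ≤ ε := hG _
    gcongr
  have hCε : lamBar * (Real.exp (β * T) + L₁) * ε ≤ C * ε :=
    mul_le_mul_of_nonneg_right hC hε
  have m1 : Real.exp (β * y.2) * lam y.2 * (rhat y - rbar y) ≤ Real.exp (β * T) * lamBar * ε :=
    le_trans (le_abs_self _) hb1
  have m2 : lam y.2 * (Ghat y - Gbar y) * a ≤ lamBar * ε * L₁ :=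
    le_trans (le_abs_self _) hb2
  have key : fderiv ℝ φ y (0, 1) + (-(Real.exp (β * y.2)) * lam y.2 * rhat y - lam y.2 * Ghat y * a)
      = (fderiv ℝ φ y (0, 1) - C * ε + (-(Real.exp (β * y.2)) * lam y.2 * rbar y - lam y.2 * Gbar y * a))
        + C * ε - Real.exp (β * y.2) * lam y.2 * (rhat y - rbar y)
        - lam y.2 * (Ghat y - Gbar y) * a := by ring
  show (0:ℝ) ≤ fderiv ℝ φ y (0, 1) + (-(Real.exp (β * y.2)) * lam y.2 * rhat y - lam y.2 * Ghat y * a)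
  rw [key]
  linarith [hsuper, hCε, m1, m2]
end

section
/- Let β ≥ 0, z₀ > 0, c ∈ (0, 1], and R, B ∈ [0, ∞), ε ≥ 0. Let r̄, r̂, π̄, π̂ : [0, z₀] → ℝ be continuous functions with c ≤ π̄(z) ≤ 1, c ≤ π̂(z) ≤ 1, |r̄(z)| ≤ R, |r̂(z)| ≤ R, |r̄(z) − r̂(z)| ≤ ε and |π̄(z) − π̂(z)| ≤ ε for all z ∈ [0, z₀]. Let h, ĥ : [0, z₀] → ℝ be differentiable functions with h(0) = ĥ(0) = 0 satisfying β·h(z) = r̄(z) − π̄(z)·h′(z) and β·ĥ(z) = r̂(z) − π̂(z)·ĥ′(z) for all z ∈ [0, z₀], and suppose |ĥ(z)| ≤ B for all z ∈ [0, z₀]. Then sup_{z ∈ [0, z₀]} |h(z) − ĥ(z)| ≤ M₁·ε, where M₁ := z₀·(1 + R + β·B)·c^{−2}·e^{β·z₀/c}. -/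
open Set

/-- Regret-type stability bound for the ODE of Section 2: if `h` and `ĥ` solve
`β h = r̄ − π̄ h′` and `β ĥ = r̂ − π̂ ĥ′` on `[0, z₀]` with `h 0 = ĥ 0 = 0`, where the
coefficient pairs are within `ε` in sup norm, `c ≤ π̄, π̂ ≤ 1`, `|r̄|, |r̂| ≤ R` and
`|ĥ| ≤ B`, then `sup_{[0,z₀]} |h − ĥ| ≤ M₁ ε` with
`M₁ = z₀ (1 + R + β B) c⁻² e^{β z₀ / c}`. -/
theorem stmt_9 (β z₀ c R B ε : ℝ) (hβ : 0 ≤ β) (hz₀ : 0 < z₀)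
    (hc0 : 0 < c) (hc1 : c ≤ 1) (hR : 0 ≤ R) (hB : 0 ≤ B) (hε : 0 ≤ ε)
    (rbar rhat pibar pihat : ℝ → ℝ)
    (hrbarC : ContinuousOn rbar (Icc 0 z₀)) (hrhatC : ContinuousOn rhat (Icc 0 z₀))
    (hpibarC : ContinuousOn pibar (Icc 0 z₀)) (hpihatC : ContinuousOn pihat (Icc 0 z₀))
    (hpibar : ∀ z ∈ Icc 0 z₀, c ≤ pibar z ∧ pibar z ≤ 1)
    (hpihat : ∀ z ∈ Icc 0 z₀, c ≤ pihat z ∧ pihat z ≤ 1)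
    (hrbarB : ∀ z ∈ Icc 0 z₀, |rbar z| ≤ R) (hrhatB : ∀ z ∈ Icc 0 z₀, |rhat z| ≤ R)
    (hrε : ∀ z ∈ Icc 0 z₀, |rbar z - rhat z| ≤ ε)
    (hπε : ∀ z ∈ Icc 0 z₀, |pibar z - pihat z| ≤ ε)
    (h hhat h' hhat' : ℝ → ℝ)
    (hh0 : h 0 = 0) (hhat0 : hhat 0 = 0)
    (hderiv : ∀ z ∈ Icc 0 z₀, HasDerivWithinAt h (h' z) (Icc 0 z₀) z)
    (hode : ∀ z ∈ Icc 0 z₀, β * h z = rbar z - pibar z * h' z)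
    (hderivhat : ∀ z ∈ Icc 0 z₀, HasDerivWithinAt hhat (hhat' z) (Icc 0 z₀) z)
    (hodehat : ∀ z ∈ Icc 0 z₀, β * hhat z = rhat z - pihat z * hhat' z)
    (hhatB : ∀ z ∈ Icc 0 z₀, |hhat z| ≤ B) :
    ∀ z ∈ Icc 0 z₀,
      |h z - hhat z| ≤ z₀ * (1 + R + β * B) / c ^ 2 * Real.exp (β * z₀ / c) * ε := by
  set E : ℝ := (1 + R + β * B) / c ^ 2 * ε with hE
  have hEnn : 0 ≤ E := by positivity
  have hu : ∀ t ∈ Icc (0:ℝ) z₀,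
      HasDerivWithinAt (fun z => h z - hhat z) (h' t - hhat' t) (Icc 0 z₀) t :=
    fun t ht => (hderiv t ht).sub (hderivhat t ht)
  have huC : ContinuousOn (fun z => h z - hhat z) (Icc 0 z₀) :=
    fun t ht => (hu t ht).continuousWithinAt
  have hu' : ∀ t ∈ Ico (0:ℝ) z₀,
      HasDerivWithinAt (fun z => h z - hhat z) (h' t - hhat' t) (Ici t) t := by
    intro t ht
    exact (hu t (Ico_subset_Icc_self ht)).mono_of_mem_nhdsWithin (Icc_mem_nhdsGE_of_mem ht)
  have bound : ∀ t ∈ Ico (0:ℝ) z₀,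
      ‖h' t - hhat' t‖ ≤ (β / c) * ‖h t - hhat t‖ + E := by
    intro t ht'
    have ht := Ico_subset_Icc_self ht'
    obtain ⟨hpc, hp1⟩ := hpibar t ht
    obtain ⟨hqc, hq1⟩ := hpihat t ht
    have hp0 : 0 < pibar t := lt_of_lt_of_le hc0 hpc
    have hq0 : 0 < pihat t := lt_of_lt_of_le hc0 hqc
    have hderp : h' t = (rbar t - β * h t) / pibar t := by
      field_simp
      linarith [hode t ht]
    have hderq : hhat' t = (rhat t - β * hhat t) / pihat t := by
      field_simp
      linarith [hodehat t ht]
    have hid : h' t - hhat' t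
        = ((rbar t - rhat t) - β * (h t - hhat t)) / pibar t
          + (rhat t - β * hhat t) * (pihat t - pibar t) / (pibar t * pihat t) := by
      rw [hderp, hderq]; field_simp; ring
    rw [Real.norm_eq_abs, Real.norm_eq_abs, hid]
    have h1 : |((rbar t - rhat t) - β * (h t - hhat t)) / pibar t|
        ≤ (ε + β * |h t - hhat t|) / c := by
      rw [abs_div, abs_of_pos hp0]
      apply div_le_div₀ (by positivity) _ hc0 hpc
      calc |(rbar t - rhat t) - β * (h t - hhat t)|
          ≤ |rbar t - rhat t| + |β * (h t - hhat t)| := abs_sub _ _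
        _ ≤ ε + β * |h t - hhat t| := by
            rw [abs_mul, abs_of_nonneg hβ]
            exact add_le_add_left (hrε t ht) _
    have h2 : |(rhat t - β * hhat t) * (pihat t - pibar t) / (pibar t * pihat t)|
        ≤ (R + β * B) * ε / c ^ 2 := by
      rw [abs_div, abs_mul, abs_of_pos (mul_pos hp0 hq0)]
      apply div_le_div₀ (by positivity) _ (by positivity) _
      · apply mul_le_mul _ _ (abs_nonneg _) (by positivity)
        · calc |rhat t - β * hhat t|
              ≤ |rhat t| + |β * hhat t| := abs_sub _ _
            _ ≤ R + β * B := by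
                rw [abs_mul, abs_of_nonneg hβ]
                exact add_le_add (hrhatB t ht) (mul_le_mul_of_nonneg_left (hhatB t ht) hβ)
        · rw [abs_sub_comm]; exact hπε t ht
      · calc c ^ 2 = c * c := sq c
          _ ≤ pibar t * pihat t := mul_le_mul hpc hqc hc0.le hp0.le
    have hεc : ε / c ≤ ε / c ^ 2 := by
      apply div_le_div_of_nonneg_left hε (by positivity)
      nlinarith
    calc |((rbar t - rhat t) - β * (h t - hhat t)) / pibar t
          + (rhat t - β * hhat t) * (pihat t - pibar t) / (pibar t * pihat t)|
        ≤ |((rbar t - rhat t) - β * (h t - hhat t)) / pibar t|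
          + |(rhat t - β * hhat t) * (pihat t - pibar t) / (pibar t * pihat t)| := abs_add_le _ _
      _ ≤ (ε + β * |h t - hhat t|) / c + (R + β * B) * ε / c ^ 2 := add_le_add h1 h2
      _ ≤ β / c * |h t - hhat t| + E := by
          rw [hE]
          have : (ε + β * |h t - hhat t|) / c = ε / c + β / c * |h t - hhat t| := by ring
          rw [this]
          have : (1 + R + β * B) / c ^ 2 * ε = ε / c ^ 2 + (R + β * B) * ε / c ^ 2 := by ring
          rw [this]
          linarith
  have key := norm_le_gronwallBound_of_norm_deriv_right_le (δ := 0) huC hu'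
    (by simp [hh0, hhat0]) bound
  intro z hz
  have hz0 : (0:ℝ) ≤ z := hz.1
  have h1 := key z hz
  rw [Real.norm_eq_abs] at h1
  refine h1.trans ?_
  have hexp1 : 1 ≤ Real.exp (β * z₀ / c) := Real.one_le_exp (by positivity)
  rcases eq_or_lt_of_le hβ with hβ0 | hβpos
  · have hK : β / c = 0 := by rw [← hβ0]; simp
    rw [hK, gronwallBound_K0]
    simp only [sub_zero]
    calc (0:ℝ) + E * z ≤ E * z₀ := by nlinarith [mul_le_mul_of_nonneg_left hz.2 hEnn]
      _ ≤ E * z₀ * Real.exp (β * z₀ / c) := le_mul_of_one_le_right (by positivity) hexp1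
      _ = z₀ * (1 + R + β * B) / c ^ 2 * Real.exp (β * z₀ / c) * ε := by rw [hE]; ring
  · have hKpos : 0 < β / c := div_pos hβpos hc0
    rw [gronwallBound_of_K_ne_0 hKpos.ne']
    simp only [zero_mul, zero_add, sub_zero]
    set K := β / c with hKdef
    have key2 : Real.exp (K * z) - 1 ≤ K * z * Real.exp (K * z) := by
      have h3 := mul_le_mul_of_nonneg_right (Real.add_one_le_exp (-(K * z)))
        (Real.exp_pos (K * z)).le
      rw [Real.exp_neg, inv_mul_cancel₀ (Real.exp_ne_zero _)] at h3
      nlinarith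
    have hexpz : Real.exp (K * z) ≤ Real.exp (β * z₀ / c) := by
      apply Real.exp_le_exp.mpr
      rw [hKdef]
      calc β / c * z ≤ β / c * z₀ := mul_le_mul_of_nonneg_left hz.2 hKpos.le
        _ = β * z₀ / c := by ring
    calc E / K * (Real.exp (K * z) - 1)
        ≤ E / K * (K * z * Real.exp (K * z)) :=
          mul_le_mul_of_nonneg_left key2 (by positivity)
      _ = E * (z * Real.exp (K * z)) := by field_simp
      _ ≤ E * (z₀ * Real.exp (β * z₀ / c)) := by
          apply mul_le_mul_of_nonneg_left _ hEnn
          exact mul_le_mul hz.2 hexpz (Real.exp_pos _).le hz₀.le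
      _ = z₀ * (1 + R + β * B) / c ^ 2 * Real.exp (β * z₀ / c) * ε := by rw [hE]; ring
end

section
/- Let β ≥ 0, z₀ > 0, and c ∈ (0, 1]. Let r, π : ℝ → ℝ be bounded and Lipschitz continuous with c ≤ π(z) ≤ 1 for all z. Let h : [0, z₀] → ℝ be a differentiable function with h(0) = 0 satisfying β·h(z) = r(z) − π(z)·h′(z) for all z ∈ [0, z₀]. For b > 0 define h̃_b : ℝ → ℝ by h̃_b(z) = 0 for z < 1/b, and for z ≥ 1/b by the recursion h̃_b(z) = r(z)/b + (1 − β/b)·{h̃_b(z − 1/b)·π(z) + h̃_b(z)·(1 − π(z))}, i.e., h̃_b(z) = [r(z)/b + (1 − β/b)·π(z)·h̃_b(z − 1/b)] / [1 − (1 − β/b)·(1 − π(z))]. Then there exist constants C < ∞ and b₀ < ∞, depending only on β, z₀, c, and the bounds and Lipschitz constants of r and π, such that for all b ≥ b₀, sup_{z ∈ [0, z₀]} |h̃_b(z) − h(z)| ≤ C/b. -/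
open Set

private lemma gron_aux_mono {K ε t T : ℝ} (hK : 0 ≤ K) (hε : 0 ≤ ε) (ht : 0 ≤ t)
    (hT : t ≤ T) : gronwallBound 0 K ε t ≤ gronwallBound 0 K ε T := by
  rcases eq_or_lt_of_le hK with hK0 | hKpos
  · rw [← hK0, gronwallBound_K0]
    dsimp only
    nlinarith
  · rw [gronwallBound_of_K_ne_0 hKpos.ne']
    dsimp only
    rw [zero_mul, zero_add, zero_mul, zero_add]
    have h1 : Real.exp (K * t) ≤ Real.exp (K * T) :=
      Real.exp_le_exp.mpr (by nlinarith)
    have h2 : 0 ≤ ε / K := div_nonneg hε hKpos.le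
    nlinarith

set_option maxHeartbeats 2000000 in
/-- Discretization error bound of Section 2.4: the solution `h̃_b` of the discretized
recursion with normalizing factor `b` approximates the solution `h` of the continuum ODE
`β h = r − π h′`, `h 0 = 0`, at rate `C / b`, with `C` and the threshold `b₀` depending
only on `β, z₀, c` and the bounds `R` and Lipschitz constants `Lr, Lπ` of `r` and `π`. -/
theorem stmt_10 (β z₀ c R Lr Lπ : ℝ) (hβ : 0 ≤ β) (hz₀ : 0 < z₀)
    (hc0 : 0 < c) (hc1 : c ≤ 1) (hR : 0 ≤ R) (hLr : 0 ≤ Lr) (hLπ : 0 ≤ Lπ) :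
    ∃ C b₀ : ℝ, ∀ r π : ℝ → ℝ,
      (∀ z, |r z| ≤ R) → (∀ z w, |r z - r w| ≤ Lr * |z - w|) →
      (∀ z, c ≤ π z ∧ π z ≤ 1) → (∀ z w, |π z - π w| ≤ Lπ * |z - w|) →
      ∀ h h' : ℝ → ℝ, h 0 = 0 →
        (∀ z ∈ Icc 0 z₀, HasDerivWithinAt h (h' z) (Icc 0 z₀) z) →
        (∀ z ∈ Icc 0 z₀, β * h z = r z - π z * h' z) →
        ∀ b : ℝ, b₀ ≤ b → 0 < b →
          ∀ htil : ℝ → ℝ,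
            (∀ z, z < 1 / b → htil z = 0) →
            (∀ z, 1 / b ≤ z →
              htil z = (r z / b + (1 - β / b) * π z * htil (z - 1 / b)) /
                (1 - (1 - β / b) * (1 - π z))) →
            ∀ z ∈ Icc 0 z₀, |htil z - h z| ≤ C / b := by
  set H : ℝ := gronwallBound 0 (β / c) (R / c) z₀ with hHdef
  set M : ℝ := (R + β * H) / c with hMdef
  set L : ℝ := (Lr + β * M + Lπ * (R + β * H)) / c ^ 2 with hLdef
  set C₁ : ℝ := L + β * M with hC₁def
  refine ⟨M + z₀ * C₁ / c, max β 1, ?_⟩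
  intro r π hrB hrL hπB hπL h h' h0 hderiv hode b hb₀ hb htil htil0 htilrec
  clear_value H M L C₁
  have hbβ : β ≤ b := le_trans (le_max_left _ _) hb₀
  have hβb1 : β / b ≤ 1 := (div_le_one hb).mpr hbβ
  have hβbnn : 0 ≤ β / b := div_nonneg hβ hb.le
  have hδpos : 0 < 1 / b := by positivity
  have hπc : ∀ z, (0:ℝ) < π z := fun z => lt_of_lt_of_le hc0 (hπB z).1
  -- continuity of h and the one-sided derivative for Gronwall
  have hcont : ContinuousOn h (Icc 0 z₀) := fun z hz => (hderiv z hz).continuousWithinAt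
  have hderiv' : ∀ t ∈ Ico 0 z₀, HasDerivWithinAt h (h' t) (Ici t) t := by
    intro t ht
    refine (hderiv t (Ico_subset_Icc_self ht)).mono_of_mem_nhdsWithin ?_
    rw [mem_nhdsWithin]
    exact ⟨Iio z₀, isOpen_Iio, ht.2, fun x hx => ⟨le_trans ht.1 hx.2, le_of_lt hx.1⟩⟩
  -- bound on h' in terms of h
  have hbnd' : ∀ z ∈ Icc 0 z₀, |h' z| ≤ β / c * |h z| + R / c := by
    intro z hz
    have e1 : π z * h' z = r z - β * h z := by linarith [hode z hz]
    have e2 : π z * |h' z| ≤ R + β * |h z| := by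
      have : |π z * h' z| ≤ R + β * |h z| := by
        rw [e1]
        calc |r z - β * h z| ≤ |r z| + |β * h z| := abs_sub _ _
          _ ≤ R + β * |h z| := by
              rw [abs_mul, abs_of_nonneg hβ]
              exact add_le_add (hrB z) le_rfl
      rwa [abs_mul, abs_of_pos (hπc z)] at this
    have e3 : c * |h' z| ≤ R + β * |h z| := by
      nlinarith [abs_nonneg (h' z), (hπB z).1]
    have e3 : |h' z| ≤ (R + β * |h z|) / c := by
      rw [le_div_iff₀ hc0]
      nlinarith [abs_nonneg (h' z), (hπB z).1]
    calc |h' z| ≤ (R + β * |h z|) / c := e3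
      _ = β / c * |h z| + R / c := by ring
  -- Gronwall bound on h
  have hgron := norm_le_gronwallBound_of_norm_deriv_right_le (δ := 0) (K := β / c)
    (ε := R / c) (a := 0) (b := z₀) hcont hderiv' (by simp [h0])
    (fun t ht => by simpa [Real.norm_eq_abs] using hbnd' t (Ico_subset_Icc_self ht))
  have hHb : ∀ z ∈ Icc 0 z₀, |h z| ≤ H := by
    intro z hz
    have := hgron z hz
    rw [Real.norm_eq_abs, sub_zero] at this
    refine this.trans ?_
    rw [hHdef]
    exact gron_aux_mono (div_nonneg hβ hc0.le) (div_nonneg hR hc0.le) hz.1 hz.2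
  have hHnn : 0 ≤ H := by
    have := hHb 0 ⟨le_refl 0, hz₀.le⟩
    simpa [h0] using this
  have hMnn : 0 ≤ M := by
    rw [hMdef]; exact div_nonneg (add_nonneg hR (mul_nonneg hβ hHnn)) hc0.le
  have hLnn : 0 ≤ L := by
    rw [hLdef]
    apply div_nonneg _ (by positivity)
    have : 0 ≤ Lπ * (R + β * H) := mul_nonneg hLπ (add_nonneg hR (mul_nonneg hβ hHnn))
    nlinarith [mul_nonneg hβ hMnn]
  have hC₁nn : 0 ≤ C₁ := by
    rw [hC₁def]; exact add_nonneg hLnn (mul_nonneg hβ hMnn)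
  -- pointwise bound M on |h'|
  have hh'M : ∀ z ∈ Icc 0 z₀, |h' z| ≤ M := by
    intro z hz
    calc |h' z| ≤ β / c * |h z| + R / c := hbnd' z hz
      _ ≤ β / c * H + R / c := by
          have := hHb z hz
          nlinarith [div_nonneg hβ hc0.le]
      _ = M := by rw [hMdef]; ring
  -- h is M-Lipschitz on [0, z₀]
  have hhLip : ∀ z ∈ Icc 0 z₀, ∀ w ∈ Icc 0 z₀, |h z - h w| ≤ M * |z - w| := by
    intro z hz w hw
    have := Convex.norm_image_sub_le_of_norm_hasDerivWithin_le hderiv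
      (fun x hx => by simpa [Real.norm_eq_abs] using hh'M x hx) (convex_Icc 0 z₀) hw hz
    simpa [Real.norm_eq_abs] using this
  -- h' expressed from the ODE
  have hODE : ∀ z ∈ Icc 0 z₀, h' z = (r z - β * h z) / π z := by
    intro z hz
    rw [eq_div_iff (hπc z).ne']
    linear_combination hode z hz
  -- h' is L-Lipschitz on [0, z₀]
  have hh'Lip : ∀ z ∈ Icc 0 z₀, ∀ w ∈ Icc 0 z₀, |h' z - h' w| ≤ L * |z - w| := by
    intro z hz w hw
    have hnum : |(r z - β * h z) * π w - (r w - β * h w) * π z|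
        ≤ (Lr + β * M + Lπ * (R + β * H)) * |z - w| := by
      have e : (r z - β * h z) * π w - (r w - β * h w) * π z
          = π w * ((r z - r w) - β * (h z - h w)) + (r w - β * h w) * (π w - π z) := by
        ring
      rw [e]
      have t1 : |π w * ((r z - r w) - β * (h z - h w))| ≤ (Lr + β * M) * |z - w| := by
        rw [abs_mul]
        have a1 : |π w| ≤ 1 := by rw [abs_of_pos (hπc w)]; exact (hπB w).2
        have a2 : |(r z - r w) - β * (h z - h w)| ≤ (Lr + β * M) * |z - w| := by
          calc |(r z - r w) - β * (h z - h w)| ≤ |r z - r w| + |β * (h z - h w)| :=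
                abs_sub _ _
            _ ≤ Lr * |z - w| + β * (M * |z - w|) := by
                have := hrL z w
                have h2 : |β * (h z - h w)| ≤ β * (M * |z - w|) := by
                  rw [abs_mul, abs_of_nonneg hβ]
                  exact mul_le_mul_of_nonneg_left (hhLip z hz w hw) hβ
                linarith
            _ = (Lr + β * M) * |z - w| := by ring
        calc |π w| * |(r z - r w) - β * (h z - h w)|
            ≤ 1 * ((Lr + β * M) * |z - w|) :=
              mul_le_mul a1 a2 (abs_nonneg _) zero_le_one
          _ = (Lr + β * M) * |z - w| := one_mul _
      have t2 : |(r w - β * h w) * (π w - π z)| ≤ Lπ * (R + β * H) * |z - w| := by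
        rw [abs_mul]
        have a1 : |r w - β * h w| ≤ R + β * H := by
          calc |r w - β * h w| ≤ |r w| + |β * h w| := abs_sub _ _
            _ ≤ R + β * H := by
                rw [abs_mul, abs_of_nonneg hβ]
                have := hHb w hw
                have := hrB w
                nlinarith
        have a2 : |π w - π z| ≤ Lπ * |z - w| := by
          have := hπL w z
          rwa [abs_sub_comm z w]
        calc |r w - β * h w| * |π w - π z| ≤ (R + β * H) * (Lπ * |z - w|) :=
              mul_le_mul a1 a2 (abs_nonneg _) (add_nonneg hR (mul_nonneg hβ hHnn))
          _ = Lπ * (R + β * H) * |z - w| := by ring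
      calc |π w * ((r z - r w) - β * (h z - h w)) + (r w - β * h w) * (π w - π z)|
          ≤ |π w * ((r z - r w) - β * (h z - h w))| + |(r w - β * h w) * (π w - π z)| :=
            abs_add_le _ _
        _ ≤ (Lr + β * M) * |z - w| + Lπ * (R + β * H) * |z - w| := add_le_add t1 t2
        _ = (Lr + β * M + Lπ * (R + β * H)) * |z - w| := by ring
    have key : h' z - h' w
        = ((r z - β * h z) * π w - (r w - β * h w) * π z) / (π z * π w) := by
      rw [hODE z hz, hODE w hw, div_sub_div _ _ (hπc z).ne' (hπc w).ne']
      ring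
    rw [key, abs_div, abs_of_pos (mul_pos (hπc z) (hπc w))]
    have hc2 : c ^ 2 ≤ π z * π w := by nlinarith [(hπB z).1, (hπB w).1]
    calc |(r z - β * h z) * π w - (r w - β * h w) * π z| / (π z * π w)
        ≤ |(r z - β * h z) * π w - (r w - β * h w) * π z| / c ^ 2 :=
          div_le_div_of_nonneg_left (abs_nonneg _) (by positivity) hc2
        _ ≤ (Lr + β * M + Lπ * (R + β * H)) * |z - w| / c ^ 2 := by gcongr
        _ = L * |z - w| := by rw [hLdef]; ring
  -- Taylor-type estimate
  have hTaylor : ∀ z ∈ Icc 0 z₀, 1 / b ≤ z →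
      |h z - h (z - 1 / b) - 1 / b * h' z| ≤ L * (1 / b) ^ 2 := by
    intro z hz hδz
    have hsub : Icc (z - 1 / b) z ⊆ Icc 0 z₀ :=
      Icc_subset_Icc (by linarith [hz.1]) hz.2
    have hgd : ∀ w ∈ Icc (z - 1 / b) z,
        HasDerivWithinAt (fun w => h w - h' z * w) (h' w - h' z) (Icc (z - 1 / b) z) w := by
      intro w hw
      have := ((hderiv w (hsub hw)).mono hsub).sub
        ((hasDerivWithinAt_id w (Icc (z - 1 / b) z)).const_mul (h' z))
      exact this.congr_deriv (by ring)
    have hbd : ∀ w ∈ Icc (z - 1 / b) z, ‖h' w - h' z‖ ≤ L * (1 / b) := by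
      intro w hw
      rw [Real.norm_eq_abs]
      have : |h' w - h' z| ≤ L * |w - z| := hh'Lip w (hsub hw) z hz
      have hwz : |w - z| ≤ 1 / b := by
        rw [abs_le]; constructor <;> [linarith [hw.1]; linarith [hw.2, hδpos.le]]
      nlinarith
    have := Convex.norm_image_sub_le_of_norm_hasDerivWithin_le hgd hbd
      (convex_Icc _ _) ⟨le_refl _, by linarith⟩ ⟨by linarith, le_refl z⟩
    rw [Real.norm_eq_abs, Real.norm_eq_abs] at this
    have e1 : (h z - h' z * z) - (h (z - 1 / b) - h' z * (z - 1 / b))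
        = h z - h (z - 1 / b) - 1 / b * h' z := by ring
    have e2 : |z - (z - 1 / b)| = 1 / b := by
      rw [show z - (z - 1 / b) = 1 / b by ring, abs_of_pos hδpos]
    rw [e1, e2] at this
    calc |h z - h (z - 1 / b) - 1 / b * h' z| ≤ L * (1 / b) * (1 / b) := this
      _ = L * (1 / b) ^ 2 := by ring
  -- one-step error estimate
  have hstep : ∀ z ∈ Icc 0 z₀, 1 / b ≤ z →
      |htil z - h z| ≤ |htil (z - 1 / b) - h (z - 1 / b)| + C₁ * (1 / b) ^ 2 / c := by
    intro z hz hδz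
    set D : ℝ := 1 - (1 - β / b) * (1 - π z) with hDdef
    have hDc : c ≤ D := by
      rw [hDdef]
      nlinarith [(hπB z).1, (hπB z).2, mul_nonneg hβbnn (sub_nonneg.mpr (hπB z).2)]
    have hDpos : 0 < D := lt_of_lt_of_le hc0 hDc
    have hrec := htilrec z hδz
    rw [eq_div_iff hDpos.ne'] at hrec
    -- consistency error
    set τ : ℝ := D * h z - (r z / b + (1 - β / b) * π z * h (z - 1 / b)) with hτdef
    have hzsub : z - 1 / b ∈ Icc 0 z₀ := ⟨by linarith [hz.1], by linarith [hz.2, hδpos.le]⟩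
    have hr : r z = β * h z + π z * h' z := by linarith [hode z hz]
    have hτeq : τ = π z * (h z - h (z - 1 / b) - 1 / b * h' z)
        - β / b * π z * (h z - h (z - 1 / b)) := by
      rw [hτdef, hDdef, hr]
      field_simp
      ring
    have hτbd : |τ| ≤ C₁ * (1 / b) ^ 2 := by
      rw [hτeq]
      have t1 : |π z * (h z - h (z - 1 / b) - 1 / b * h' z)| ≤ L * (1 / b) ^ 2 := by
        rw [abs_mul, abs_of_pos (hπc z)]
        have := hTaylor z hz hδz
        nlinarith [(hπB z).2, abs_nonneg (h z - h (z - 1 / b) - 1 / b * h' z)]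
      have t2 : |β / b * π z * (h z - h (z - 1 / b))| ≤ β * M * (1 / b) ^ 2 := by
        rw [abs_mul, abs_mul, abs_of_nonneg hβbnn, abs_of_pos (hπc z)]
        have hl : |h z - h (z - 1 / b)| ≤ M * (1 / b) := by
          have := hhLip z hz (z - 1 / b) hzsub
          have e : |z - (z - 1 / b)| = 1 / b := by
            rw [show z - (z - 1 / b) = 1 / b by ring, abs_of_pos hδpos]
          rw [e] at this
          exact this
        have hβb : β / b ≤ β * (1 / b) := by rw [mul_one_div]
        have : β / b * π z ≤ β * (1 / b) := by
          nlinarith [(hπB z).2, hβbnn]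
        nlinarith [abs_nonneg (h z - h (z - 1 / b)), mul_nonneg hβ (by positivity : (0:ℝ) ≤ 1/b)]
      calc |π z * (h z - h (z - 1 / b) - 1 / b * h' z)
            - β / b * π z * (h z - h (z - 1 / b))|
          ≤ |π z * (h z - h (z - 1 / b) - 1 / b * h' z)|
            + |β / b * π z * (h z - h (z - 1 / b))| := abs_sub _ _
        _ ≤ L * (1 / b) ^ 2 + β * M * (1 / b) ^ 2 := add_le_add t1 t2
        _ = C₁ * (1 / b) ^ 2 := by rw [hC₁def]; ring
    -- error recursion
    have hErec : (htil z - h z) * D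
        = (1 - β / b) * π z * (htil (z - 1 / b) - h (z - 1 / b)) - τ := by
      rw [hτdef]
      have : h z * D = D * h z := by ring
      nlinarith [hrec]
    have hDge : (1 - β / b) * π z ≤ D := by
      have : D - (1 - β / b) * π z = β / b := by rw [hDdef]; ring
      linarith [hβbnn]
    have hcoefnn : 0 ≤ (1 - β / b) * π z :=
      mul_nonneg (by linarith) (hπc z).le
    have hX : |(1 - β / b) * π z * (htil (z - 1 / b) - h (z - 1 / b)) - τ|
        ≤ D * |htil (z - 1 / b) - h (z - 1 / b)| + C₁ * (1 / b) ^ 2 := by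
      calc |(1 - β / b) * π z * (htil (z - 1 / b) - h (z - 1 / b)) - τ|
          ≤ |(1 - β / b) * π z * (htil (z - 1 / b) - h (z - 1 / b))| + |τ| := abs_sub _ _
        _ ≤ D * |htil (z - 1 / b) - h (z - 1 / b)| + C₁ * (1 / b) ^ 2 := by
            have : |(1 - β / b) * π z * (htil (z - 1 / b) - h (z - 1 / b))|
                = (1 - β / b) * π z * |htil (z - 1 / b) - h (z - 1 / b)| := by
              rw [abs_mul, abs_of_nonneg hcoefnn]
            rw [this]
            have := abs_nonneg (htil (z - 1 / b) - h (z - 1 / b))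
            nlinarith [hτbd]
    have habs : |htil z - h z| * D
        = |(1 - β / b) * π z * (htil (z - 1 / b) - h (z - 1 / b)) - τ| := by
      rw [← hErec, abs_mul, abs_of_pos hDpos]
    have h5 : |htil z - h z| * D ≤ D * |htil (z - 1 / b) - h (z - 1 / b)| + C₁ * (1 / b) ^ 2 := by
      rw [habs]; exact hX
    have h7 : |htil z - h z|
        ≤ (D * |htil (z - 1 / b) - h (z - 1 / b)| + C₁ * (1 / b) ^ 2) / D := by
      rw [le_div_iff₀ hDpos]; exact h5
    have h8 : (D * |htil (z - 1 / b) - h (z - 1 / b)| + C₁ * (1 / b) ^ 2) / D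
        = |htil (z - 1 / b) - h (z - 1 / b)| + C₁ * (1 / b) ^ 2 / D := by
      rw [add_div, mul_div_cancel_left₀ _ hDpos.ne']
    have h9 : C₁ * (1 / b) ^ 2 / D ≤ C₁ * (1 / b) ^ 2 / c :=
      div_le_div_of_nonneg_left (mul_nonneg hC₁nn (by positivity)) hc0 hDc
    rw [h8] at h7
    linarith
  -- base case bound
  have hbase : ∀ z ∈ Icc 0 z₀, z < 1 / b → |htil z - h z| ≤ M * (1 / b) := by
    intro z hz hlt
    rw [htil0 z hlt]
    have := hhLip z hz 0 ⟨le_refl 0, hz₀.le⟩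
    rw [h0, sub_zero, sub_zero] at this
    rw [zero_sub, abs_neg]
    calc |h z| ≤ M * |z| := this
      _ ≤ M * (1 / b) := by
          rw [abs_of_nonneg hz.1]
          exact mul_le_mul_of_nonneg_left hlt.le hMnn
  -- induction on the grid
  have hind : ∀ n : ℕ, ∀ z ∈ Icc 0 z₀, z < (n + 1) * (1 / b) →
      |htil z - h z| ≤ M * (1 / b) + n * (C₁ * (1 / b) ^ 2 / c) := by
    intro n
    induction n with
    | zero =>
      intro z hz hlt
      rw [Nat.cast_zero, zero_mul, add_zero]
      apply hbase z hz
      rw [Nat.cast_zero, zero_add, one_mul] at hlt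
      exact hlt
    | succ n ih =>
      intro z hz hlt
      by_cases hcase : z < 1 / b
      · have := hbase z hz hcase
        have hpos : 0 ≤ (n + 1 : ℕ) * (C₁ * (1 / b) ^ 2 / c) := by positivity
        linarith
      · push_neg at hcase
        have hzsub : z - 1 / b ∈ Icc 0 z₀ :=
          ⟨by linarith [hz.1], by linarith [hz.2, hδpos.le]⟩
        have hltsub : z - 1 / b < (n + 1) * (1 / b) := by
          push_cast at hlt ⊢
          nlinarith
        have hih := ih (z - 1 / b) hzsub hltsub
        have := hstep z hz hcase
        push_cast
        push_cast at hih
        linarith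
  -- conclusion
  intro z hz
  have hzb : 0 ≤ z * b := mul_nonneg hz.1 hb.le
  have hfl : (⌊z * b⌋₊ : ℝ) ≤ z * b := Nat.floor_le hzb
  have hlt : z < (⌊z * b⌋₊ + 1) * (1 / b) := by
    have h1 : z * b < ⌊z * b⌋₊ + 1 := Nat.lt_floor_add_one _
    rw [mul_one_div, lt_div_iff₀ hb]
    linarith
  have := hind ⌊z * b⌋₊ z hz hlt
  have hbound : (⌊z * b⌋₊ : ℝ) * (C₁ * (1 / b) ^ 2 / c) ≤ z₀ * C₁ / c * (1 / b) := by
    have h1 : (⌊z * b⌋₊ : ℝ) ≤ z₀ * b := le_trans hfl (by nlinarith [hz.2])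
    have h2 : 0 ≤ C₁ * (1 / b) ^ 2 / c :=
      div_nonneg (mul_nonneg hC₁nn (by positivity)) hc0.le
    calc (⌊z * b⌋₊ : ℝ) * (C₁ * (1 / b) ^ 2 / c) ≤ z₀ * b * (C₁ * (1 / b) ^ 2 / c) := by
          exact mul_le_mul_of_nonneg_right h1 h2
      _ = z₀ * C₁ / c * (1 / b) := by field_simp
  have hfinal : M * (1 / b) + (⌊z * b⌋₊ : ℝ) * (C₁ * (1 / b) ^ 2 / c)
      ≤ (M + z₀ * C₁ / c) / b := by
    have : (M + z₀ * C₁ / c) / b = M * (1 / b) + z₀ * C₁ / c * (1 / b) := by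
      field_simp
    rw [this]
    linarith
  linarith
end

section
/- Let σ ∈ (0, 1), let δ ≥ σ·ln(1/σ), and let c ≥ 0. Let ξ_σ : ℝ → ℝ be the logistic function ξ_σ(w) = (1 + e^{−w/σ})^{−1}, with derivative ξ_σ′(w) = (1/σ)·e^{−w/σ}·(1 + e^{−w/σ})^{−2}. Let μ be a probability measure on ℝ such that μ(A) ≤ c·Leb(A) for every Borel set A ⊆ [−δ, δ], where Leb denotes Lebesgue measure. Then ∫ ξ_σ′ dμ ≤ 1 + 2c. -/
open MeasureTheory Set

/-- The integral bound from Appendix B.1: for the logistic function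
`ξ_σ(w) = (1 + e^{−w/σ})⁻¹` with `σ ∈ (0,1)`, `δ ≥ σ ln(1/σ)`, and a probability measure
`μ` whose restriction to `[−δ, δ]` has density bounded by `c` with respect to Lebesgue
measure, one has `∫ ξ_σ′ dμ ≤ 1 + 2c`. -/
theorem stmt_17 (σ δ c : ℝ) (hσ : σ ∈ Ioo (0 : ℝ) 1) (hδ : σ * Real.log (1 / σ) ≤ δ)
    (hc : 0 ≤ c) (μ : Measure ℝ) [IsProbabilityMeasure μ]
    (hμ : ∀ A : Set ℝ, MeasurableSet A → A ⊆ Icc (-δ) δ →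
      μ A ≤ ENNReal.ofReal c * volume A) :
    ∫ w, (1 / σ) * Real.exp (-w / σ) * ((1 + Real.exp (-w / σ))⁻¹) ^ 2 ∂μ ≤ 1 + 2 * c := by
  obtain ⟨hσ0, hσ1⟩ := hσ
  set f : ℝ → ℝ := fun w => (1 / σ) * Real.exp (-w / σ) * ((1 + Real.exp (-w / σ))⁻¹) ^ 2
    with hfdef
  have hδ0 : 0 < δ := lt_of_lt_of_le
    (mul_pos hσ0 (Real.log_pos (one_lt_one_div hσ0 hσ1))) hδ
  have hEpos : ∀ w : ℝ, 0 < Real.exp (-w / σ) := fun w => Real.exp_pos _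
  have h1E : ∀ w : ℝ, (0:ℝ) < 1 + Real.exp (-w / σ) := fun w => by positivity
  have hEcont : Continuous fun w : ℝ => Real.exp (-w / σ) := by continuity
  have hcont : Continuous f :=
    (continuous_const.mul hEcont).mul
      (((continuous_const.add hEcont).inv₀ fun w => (h1E w).ne').pow 2)
  have hfnn : ∀ w, 0 ≤ f w := fun w => by
    have h2 := hEpos w
    have h3 := h1E w
    positivity
  -- global bound for integrability
  have hbound : ∀ w, f w ≤ 1 / σ * (1 / 4) := by
    intro w
    have hE := hEpos w
    have h1 := h1E w
    have key : Real.exp (-w / σ) * ((1 + Real.exp (-w / σ))⁻¹) ^ 2 ≤ 1 / 4 := by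
      rw [inv_pow, ← div_eq_mul_inv, div_le_iff₀ (by positivity)]
      nlinarith [sq_nonneg (1 - Real.exp (-w / σ))]
    calc f w = 1 / σ * (Real.exp (-w / σ) * ((1 + Real.exp (-w / σ))⁻¹) ^ 2) := by
          rw [hfdef]; ring
      _ ≤ 1 / σ * (1 / 4) := mul_le_mul_of_nonneg_left key (by positivity)
  have hint : Integrable f μ := by
    refine (integrable_const (1 / σ * (1 / 4))).mono' hcont.aestronglyMeasurable
      (Filter.Eventually.of_forall fun w => ?_)
    rw [Real.norm_eq_abs, abs_of_nonneg (hfnn w)]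
    exact hbound w
  have hexpδ : Real.exp (-δ / σ) ≤ σ := by
    have hlog : -δ / σ ≤ Real.log σ := by
      rw [Real.log_div one_ne_zero hσ0.ne', Real.log_one] at hδ
      rw [div_le_iff₀ hσ0]
      nlinarith
    calc Real.exp (-δ / σ) ≤ Real.exp (Real.log σ) := Real.exp_le_exp.mpr hlog
      _ = σ := Real.exp_log hσ0
  have hIcc : MeasurableSet (Icc (-δ) δ) := measurableSet_Icc
  -- Part A : integral over the complement is ≤ 1
  have hA : ∫ w in (Icc (-δ) δ)ᶜ, f w ∂μ ≤ 1 := by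
    have hle1 : ∀ w ∈ (Icc (-δ) δ)ᶜ, f w ≤ 1 := by
      intro w hw
      simp only [mem_compl_iff, mem_Icc, not_and_or, not_le] at hw
      have hE := hEpos w
      have h1 := h1E w
      rcases hw with hw | hw
      · -- w < -δ : exp(-w/σ) is large, use f ≤ (1/σ) E⁻¹
        have hEinvσ : (Real.exp (-w / σ))⁻¹ ≤ σ := by
          rw [← Real.exp_neg, neg_div, neg_neg]
          refine le_trans (Real.exp_le_exp.mpr ?_) hexpδ
          exact (div_le_div_iff_of_pos_right hσ0).mpr (by linarith)
        have key : Real.exp (-w / σ) * ((1 + Real.exp (-w / σ))⁻¹) ^ 2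
            ≤ (Real.exp (-w / σ))⁻¹ := by
          rw [inv_pow, ← div_eq_mul_inv, div_le_iff₀ (by positivity)]
          have hEE : (Real.exp (-w / σ))⁻¹ * Real.exp (-w / σ) = 1 :=
            inv_mul_cancel₀ hE.ne'
          nlinarith [inv_nonneg.mpr hE.le]
        calc f w = 1 / σ * (Real.exp (-w / σ) * ((1 + Real.exp (-w / σ))⁻¹) ^ 2) := by
              rw [hfdef]; ring
          _ ≤ 1 / σ * (Real.exp (-w / σ))⁻¹ := mul_le_mul_of_nonneg_left key (by positivity)
          _ ≤ 1 / σ * σ := mul_le_mul_of_nonneg_left hEinvσ (by positivity)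
          _ = 1 := by field_simp
      · -- δ < w : exp(-w/σ) ≤ σ
        have hEsmall : Real.exp (-w / σ) ≤ σ :=
          le_trans (Real.exp_le_exp.mpr ((div_le_div_iff_of_pos_right hσ0).mpr (by linarith))) hexpδ
        have hinv : (0:ℝ) < (1 + Real.exp (-w / σ))⁻¹ := by positivity
        have hIle : (1 + Real.exp (-w / σ))⁻¹ ≤ 1 := by
          rw [show (1:ℝ) = 1⁻¹ from inv_one.symm]
          exact inv_anti₀ one_pos (by linarith)
        have hI2 : ((1 + Real.exp (-w / σ))⁻¹) ^ 2 ≤ 1 := by nlinarith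
        calc f w ≤ 1 / σ * Real.exp (-w / σ) * 1 :=
              mul_le_mul_of_nonneg_left hI2 (by positivity)
          _ = 1 / σ * Real.exp (-w / σ) := mul_one _
          _ ≤ 1 / σ * σ := mul_le_mul_of_nonneg_left hEsmall (by positivity)
          _ = 1 := by field_simp
    calc ∫ w in (Icc (-δ) δ)ᶜ, f w ∂μ ≤ ∫ _ in (Icc (-δ) δ)ᶜ, (1:ℝ) ∂μ :=
          setIntegral_mono_on hint.integrableOn (integrable_const 1).integrableOn
            hIcc.compl hle1
      _ = (μ (Icc (-δ) δ)ᶜ).toReal := by simp; rfl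
      _ ≤ (1 : ENNReal).toReal := ENNReal.toReal_mono ENNReal.one_ne_top prob_le_one
      _ = 1 := by simp
  -- Part B : integral over Icc is ≤ 2c
  have hB : ∫ w in Icc (-δ) δ, f w ∂μ ≤ 2 * c := by
    have hrest : μ.restrict (Icc (-δ) δ)
        ≤ (ENNReal.ofReal c) • volume.restrict (Icc (-δ) δ) := by
      refine Measure.le_iff.mpr fun A hA => ?_
      rw [Measure.restrict_apply hA, Measure.smul_apply, Measure.restrict_apply hA,
        smul_eq_mul]
      exact hμ _ (hA.inter hIcc) inter_subset_right
    have hintvol : IntegrableOn f (Icc (-δ) δ) volume :=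
      hcont.integrableOn_Icc
    have hintsmul : Integrable f ((ENNReal.ofReal c) • volume.restrict (Icc (-δ) δ)) :=
      hintvol.smul_measure ENNReal.ofReal_ne_top
    have hmono : ∫ w in Icc (-δ) δ, f w ∂μ
        ≤ ∫ w, f w ∂((ENNReal.ofReal c) • volume.restrict (Icc (-δ) δ)) :=
      integral_mono_measure hrest (Filter.Eventually.of_forall hfnn) hintsmul
    have hsmul : ∫ w, f w ∂((ENNReal.ofReal c) • volume.restrict (Icc (-δ) δ))
        = c * ∫ w in Icc (-δ) δ, f w ∂volume := by
      rw [integral_smul_measure, ENNReal.toReal_ofReal hc, smul_eq_mul]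
    -- compute the Lebesgue integral via FTC
    have hderiv : ∀ w : ℝ, HasDerivAt (fun w => (1 + Real.exp (-w / σ))⁻¹) (f w) w := by
      intro w
      have h1 : HasDerivAt (fun w : ℝ => -w / σ) (-1 / σ) w :=
        ((hasDerivAt_id w).neg).div_const σ
      have h2 : HasDerivAt (fun w : ℝ => Real.exp (-w / σ))
          (Real.exp (-w / σ) * (-1 / σ)) w := (Real.hasDerivAt_exp _).comp w h1
      have h3 := (h2.const_add 1).inv (h1E w).ne'
      refine h3.congr_deriv ?_
      rw [hfdef]
      have := (h1E w).ne'
      field_simp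
    have hFTC : ∫ w in Icc (-δ) δ, f w ∂volume
        = (1 + Real.exp (-δ / σ))⁻¹ - (1 + Real.exp (-(-δ) / σ))⁻¹ := by
      rw [integral_Icc_eq_integral_Ioc, ← intervalIntegral.integral_of_le (by linarith)]
      exact intervalIntegral.integral_eq_sub_of_hasDerivAt (fun w _ => hderiv w)
        (hcont.intervalIntegrable _ _)
    have hval : ∫ w in Icc (-δ) δ, f w ∂volume ≤ 1 := by
      rw [hFTC]
      have h1 : (1 + Real.exp (-δ / σ))⁻¹ ≤ 1 := by
        rw [show (1:ℝ) = 1⁻¹ from inv_one.symm]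
        exact inv_anti₀ one_pos (by nlinarith [Real.exp_pos (-δ / σ)])
      have h2 : (0:ℝ) ≤ (1 + Real.exp (-(-δ) / σ))⁻¹ := by positivity
      linarith
    calc ∫ w in Icc (-δ) δ, f w ∂μ ≤ c * ∫ w in Icc (-δ) δ, f w ∂volume := by
          rw [← hsmul]; exact hmono
      _ ≤ c * 1 := mul_le_mul_of_nonneg_left hval hc
      _ ≤ 2 * c := by linarith
  calc ∫ w, f w ∂μ
      = (∫ w in Icc (-δ) δ, f w ∂μ) + ∫ w in (Icc (-δ) δ)ᶜ, f w ∂μ :=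
        (integral_add_compl hIcc hint).symm
    _ ≤ 2 * c + 1 := add_le_add hB hA
    _ = 1 + 2 * c := by ring
end
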